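/- arXiv:math/0406446 — 2 statements merged into one kernel-verified Lean document; each statement's English description precedes it below -/
import Mathlib

section
/- Let b ≥ 2 be an integer and ε ∈ (0,1) with b(1−2ε)² > 1. Then the reconstruction problem for the b-ary tree T_b and the binary symmetric channel with error probability ε is solvable, and moreover it is census solvable. -/
open Filter

/-- The distribution of the configuration at level `n` of the `b`-ary tree,
for the broadcast process with channel `M`, given that the root has value `i`.
Vertices at level `n` are encoded as paths `Fin n → Fin b`. -/
noncomputable def levelDist {A : Type} [Fintype A] [DecidableEq A]
    (M : A → A → ℝ) (b : ℕ) (i : A) : (n : ℕ) → ((Fin n → Fin b) → A) → ℝ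
  | 0 => fun σ => if σ = (fun _ => i) then 1 else 0
  | n + 1 => fun τ => ∑ σ : (Fin n → Fin b) → A, levelDist M b i n σ *
      ∏ w : Fin (n + 1) → Fin b, M (σ fun m => w m.castSucc) (τ w)

/-- Total variation distance between two (densities of) probability measures
on a finite set. -/
noncomputable def tvDist {Ω : Type*} [Fintype Ω] (P Q : Ω → ℝ) : ℝ :=
  (1 / 2) * ∑ σ, |P σ - Q σ|

/-- The census of a configuration: the number of vertices carrying each symbol. -/
def census {A : Type} [Fintype A] [DecidableEq A] {b n : ℕ}
    (σ : (Fin n → Fin b) → A) : A → ℕ :=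
  fun j => (Finset.univ.filter fun p => σ p = j).card

/-- The distribution of the census of level `n`, given that the root has value `i`. -/
noncomputable def censusDist {A : Type} [Fintype A] [DecidableEq A]
    (M : A → A → ℝ) (b : ℕ) (i : A) (n : ℕ) (c : A → ℕ) : ℝ :=
  ∑ σ : (Fin n → Fin b) → A, if census σ = c then levelDist M b i n σ else 0

/-- Total variation distance between the census distributions at level `n`
given root values `i` and `j`. -/
noncomputable def censusTV {A : Type} [Fintype A] [DecidableEq A]
    (M : A → A → ℝ) (b : ℕ) (i j : A) (n : ℕ) : ℝ :=
  (1 / 2) * ∑' c : A → ℕ, |censusDist M b i n c - censusDist M b j n c|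

/-- The binary symmetric channel with error probability `ε`, on the alphabet
`Bool` (where `true` represents `+1` and `false` represents `-1`). -/
noncomputable def bsc (ε : ℝ) : Bool → Bool → ℝ :=
  fun i j => if i = j then 1 - ε else ε

section BSCaux
open Finset

def sgn : Bool → ℝ := fun x => if x then 1 else -1
lemma sgn_mul_self (x : Bool) : sgn x * sgn x = 1 := by cases x <;> simp [sgn]
lemma bsc_nonneg {ε : ℝ} (h0 : 0 ≤ ε) (h1 : ε ≤ 1) (i j : Bool) : 0 ≤ bsc ε i j := by
  unfold bsc; split <;> linarith
lemma bsc_sum (ε : ℝ) (i : Bool) : ∑ j : Bool, bsc ε i j = 1 := by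
  cases i <;> simp [bsc]
lemma bsc_sgn (ε : ℝ) (i : Bool) : ∑ j : Bool, bsc ε i j * sgn j = (1 - 2*ε) * sgn i := by
  cases i <;> simp [bsc, sgn] <;> ring

/-- the transition kernel from level `n` to level `n+1` -/
noncomputable def ker (ε : ℝ) (b n : ℕ) (σ : (Fin n → Fin b) → Bool)
    (τ : (Fin (n+1) → Fin b) → Bool) : ℝ :=
  ∏ w : Fin (n+1) → Fin b, bsc ε (σ (Fin.init w)) (τ w)

lemma ker_nonneg {ε : ℝ} (h0 : 0 ≤ ε) (h1 : ε ≤ 1) (b n : ℕ) (σ) (τ) :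
    0 ≤ ker ε b n σ τ :=
  Finset.prod_nonneg fun _ _ => bsc_nonneg h0 h1 _ _

lemma ker_sum (ε : ℝ) (b n : ℕ) (σ : (Fin n → Fin b) → Bool) :
    ∑ τ : (Fin (n+1) → Fin b) → Bool, ker ε b n σ τ = 1 := by
  unfold _root_.ker
  rw [← Fintype.prod_sum]
  have : ∀ w : Fin (n+1) → Fin b, ∑ j : Bool, bsc ε (σ (Fin.init w)) j = 1 :=
    fun w => bsc_sum ε _
  rw [Finset.prod_congr rfl fun w _ => bsc_sum ε (σ (Fin.init w))]
  simp

/-- paths of length n+1 ≃ (init, last) -/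
def pathEquiv (b n : ℕ) : (Fin (n+1) → Fin b) ≃ (Fin n → Fin b) × Fin b where
  toFun w := (Fin.init w, w (Fin.last n))
  invFun p := Fin.snoc p.1 p.2
  left_inv w := Fin.snoc_init_self w
  right_inv p := by simp [Fin.init_snoc]

lemma sum_init {b n : ℕ} (f : (Fin n → Fin b) → ℝ) :
    ∑ w : Fin (n+1) → Fin b, f (Fin.init w) = (b : ℝ) * ∑ v, f v := by
  rw [← Equiv.sum_comp (pathEquiv b n).symm (fun w => f (Fin.init w))]
  have : ∀ p : (Fin n → Fin b) × Fin b, f (Fin.init ((pathEquiv b n).symm p)) = f p.1 := by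
    intro p; simp [pathEquiv, Fin.init_snoc]
  rw [Fintype.sum_congr _ _ this, Fintype.sum_prod_type]
  simp only [Finset.sum_const, Finset.card_univ, Fintype.card_fin, nsmul_eq_mul,
    Finset.mul_sum]

def Ssum {b n : ℕ} (σ : (Fin n → Fin b) → Bool) : ℝ := ∑ p, sgn (σ p)

lemma sum_ite_factor (ε : ℝ) (i : Bool) (c : Prop) [Decidable c] :
    ∑ x : Bool, bsc ε i x * (if c then sgn x else 1)
      = if c then (1 - 2*ε) * sgn i else 1 := by
  split
  · exact bsc_sgn ε i
  · simpa using bsc_sum ε i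

lemma sum_ite_factor2 (ε : ℝ) (i : Bool) (c d : Prop) [Decidable c] [Decidable d]
    (hcd : ¬(c ∧ d)) :
    ∑ x : Bool, bsc ε i x * ((if c then sgn x else 1) * (if d then sgn x else 1))
      = (if c then (1-2*ε) * sgn i else 1) * (if d then (1-2*ε)*sgn i else 1) := by
  by_cases hc : c
  · have hd : ¬ d := fun hd => hcd ⟨hc, hd⟩
    simp only [if_pos hc, if_neg hd, mul_one]
    exact bsc_sgn ε i
  · by_cases hd : d
    · simp only [if_neg hc, if_pos hd, one_mul]
      exact bsc_sgn ε i
    · simp only [if_neg hc, if_neg hd, mul_one]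
      exact bsc_sum ε i

lemma ker_sgn (ε : ℝ) (b n : ℕ) (σ : (Fin n → Fin b) → Bool) (w1 : Fin (n+1) → Fin b) :
    ∑ τ : (Fin (n+1) → Fin b) → Bool, ker ε b n σ τ * sgn (τ w1)
      = (1 - 2*ε) * sgn (σ (Fin.init w1)) := by
  have key : ∀ τ : (Fin (n+1) → Fin b) → Bool, ker ε b n σ τ * sgn (τ w1)
      = ∏ w, (bsc ε (σ (Fin.init w)) (τ w) * (if w = w1 then sgn (τ w) else 1)) := by
    intro τ
    rw [Finset.prod_mul_distrib]
    unfold _root_.ker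
    congr 1
    simp [Finset.prod_ite_eq']
  rw [Fintype.sum_congr _ _ key, ← Fintype.prod_sum
      (f := fun w x => bsc ε (σ (Fin.init w)) x * (if w = w1 then sgn x else 1)),
    Finset.prod_congr rfl fun w _ => sum_ite_factor ε (σ (Fin.init w)) (w = w1)]
  simp [Finset.prod_ite_eq']

lemma ker_sgn2 (ε : ℝ) (b n : ℕ) (σ : (Fin n → Fin b) → Bool)
    (w1 w2 : Fin (n+1) → Fin b) (hne : w1 ≠ w2) :
    ∑ τ : (Fin (n+1) → Fin b) → Bool, ker ε b n σ τ * (sgn (τ w1) * sgn (τ w2))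
      = ((1 - 2*ε) * sgn (σ (Fin.init w1))) * ((1 - 2*ε) * sgn (σ (Fin.init w2))) := by
  have key : ∀ τ : (Fin (n+1) → Fin b) → Bool, ker ε b n σ τ * (sgn (τ w1) * sgn (τ w2))
      = ∏ w, (bsc ε (σ (Fin.init w)) (τ w)
          * ((if w = w1 then sgn (τ w) else 1) * (if w = w2 then sgn (τ w) else 1))) := by
    intro τ
    simp only [Finset.prod_mul_distrib]
    unfold _root_.ker
    simp [Finset.prod_ite_eq']
  rw [Fintype.sum_congr _ _ key, ← Fintype.prod_sum
      (f := fun w x => bsc ε (σ (Fin.init w)) x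
        * ((if w = w1 then sgn x else 1) * (if w = w2 then sgn x else 1))),
    Finset.prod_congr rfl fun w _ => sum_ite_factor2 ε (σ (Fin.init w)) (w = w1) (w = w2)
      (by rintro ⟨rfl, rfl⟩; exact hne rfl)]
  simp only [Finset.prod_mul_distrib]
  simp [Finset.prod_ite_eq']

lemma ker_S2 (ε : ℝ) (b n : ℕ) (σ : (Fin n → Fin b) → Bool) :
    ∑ τ : (Fin (n+1) → Fin b) → Bool, ker ε b n σ τ * (Ssum τ)^2
      = (1 - (1-2*ε)^2) * (b:ℝ)^(n+1)
        + (1-2*ε)^2 * ((b:ℝ) * Ssum σ)^2 := by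
  have expand : ∀ τ : (Fin (n+1) → Fin b) → Bool, ker ε b n σ τ * (Ssum τ)^2
      = ∑ w1 : Fin (n+1) → Fin b, ∑ w2 : Fin (n+1) → Fin b,
          ker ε b n σ τ * (sgn (τ w1) * sgn (τ w2)) := by
    intro τ
    rw [sq, Ssum, Finset.sum_mul_sum]
    simp [Finset.mul_sum]
  rw [Fintype.sum_congr _ _ expand, Finset.sum_comm]
  rw [Finset.sum_congr rfl fun w1 _ => Finset.sum_comm]
  have inner : ∀ w1 w2 : Fin (n+1) → Fin b,
      ∑ τ : (Fin (n+1) → Fin b) → Bool, ker ε b n σ τ * (sgn (τ w1) * sgn (τ w2))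
        = ((1 - 2*ε) * sgn (σ (Fin.init w1))) * ((1 - 2*ε) * sgn (σ (Fin.init w2)))
          + (if w1 = w2 then 1 - (1-2*ε)^2 else 0) := by
    intro w1 w2
    rcases eq_or_ne w1 w2 with rfl | hne
    · have : ∀ τ : (Fin (n+1) → Fin b) → Bool,
          ker ε b n σ τ * (sgn (τ w1) * sgn (τ w1)) = ker ε b n σ τ := by
        intro τ; rw [sgn_mul_self, mul_one]
      rw [Fintype.sum_congr _ _ this, ker_sum]
      have h1 := sgn_mul_self (σ (Fin.init w1))
      rw [if_pos rfl]
      linear_combination (-(1-2*ε)^2) * h1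
    · rw [ker_sgn2 ε b n σ w1 w2 hne, if_neg hne, add_zero]
  rw [Finset.sum_congr rfl fun w1 _ => Finset.sum_congr rfl fun w2 _ => inner w1 w2]
  simp only [Finset.sum_add_distrib]
  have diag : ∑ w1 : Fin (n+1) → Fin b, ∑ w2 : Fin (n+1) → Fin b,
      (if w1 = w2 then (1 - (1-2*ε)^2 : ℝ) else 0) = (1 - (1-2*ε)^2) * (b:ℝ)^(n+1) := by
    have : ∀ w1 : Fin (n+1) → Fin b, ∑ w2 : Fin (n+1) → Fin b,
        (if w1 = w2 then (1 - (1-2*ε)^2 : ℝ) else 0) = 1 - (1-2*ε)^2 := by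
      intro w1; simp [Finset.sum_ite_eq]
    rw [Finset.sum_congr rfl fun w1 _ => this w1]
    simp [Finset.sum_const, Finset.card_univ]
    ring
  have offd : ∑ w1 : Fin (n+1) → Fin b, ∑ w2 : Fin (n+1) → Fin b,
      ((1 - 2*ε) * sgn (σ (Fin.init w1))) * ((1 - 2*ε) * sgn (σ (Fin.init w2)))
        = (1-2*ε)^2 * ((b:ℝ) * Ssum σ)^2 := by
    rw [← Finset.sum_mul_sum]
    have : ∑ w1 : Fin (n+1) → Fin b, (1 - 2*ε) * sgn (σ (Fin.init w1))
        = (1-2*ε) * ((b:ℝ) * Ssum σ) := by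
      rw [← Finset.mul_sum, sum_init (fun v => sgn (σ v))]
      rfl
    rw [this]; ring
  rw [diag, offd]; ring

lemma levelDist_succ (ε : ℝ) (b : ℕ) (i : Bool) (n : ℕ) (τ : (Fin (n+1) → Fin b) → Bool) :
    levelDist (bsc ε) b i (n+1) τ
      = ∑ σ : (Fin n → Fin b) → Bool, levelDist (bsc ε) b i n σ * ker ε b n σ τ := rfl

lemma levelDist_nonneg {ε : ℝ} (h0 : 0 ≤ ε) (h1 : ε ≤ 1) (b : ℕ) (i : Bool) (n : ℕ)
    (σ : (Fin n → Fin b) → Bool) : 0 ≤ levelDist (bsc ε) b i n σ := by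
  induction n with
  | zero => unfold levelDist; split <;> norm_num
  | succ n ih =>
    rw [levelDist_succ]
    exact Finset.sum_nonneg fun σ' _ => mul_nonneg (ih σ') (ker_nonneg h0 h1 b n σ' σ)

lemma levelDist_sum (ε : ℝ) (b : ℕ) (i : Bool) (n : ℕ) :
    ∑ σ : (Fin n → Fin b) → Bool, levelDist (bsc ε) b i n σ = 1 := by
  induction n with
  | zero => simp [levelDist]
  | succ n ih =>
    simp only [levelDist_succ]
    rw [Finset.sum_comm]
    have : ∀ σ : (Fin n → Fin b) → Bool,
        ∑ τ : (Fin (n+1) → Fin b) → Bool, levelDist (bsc ε) b i n σ * ker ε b n σ τ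
          = levelDist (bsc ε) b i n σ := by
      intro σ; rw [← Finset.mul_sum, ker_sum, mul_one]
    rw [Finset.sum_congr rfl fun σ _ => this σ, ih]

/-- expected value of `Ssum` at level `n` -/
lemma levelDist_mean (ε : ℝ) (b : ℕ) (i : Bool) (n : ℕ) :
    ∑ σ : (Fin n → Fin b) → Bool, levelDist (bsc ε) b i n σ * Ssum σ
      = sgn i * ((b:ℝ) * (1 - 2*ε))^n := by
  induction n with
  | zero =>
    rw [Fintype.sum_eq_single (fun _ => i)]
    · simp [levelDist, Ssum, sgn]
    · intro σ hσ; simp only [levelDist]; rw [if_neg hσ, zero_mul]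
  | succ n ih =>
    simp only [levelDist_succ]
    have swap : ∑ τ : (Fin (n+1) → Fin b) → Bool,
        (∑ σ : (Fin n → Fin b) → Bool, levelDist (bsc ε) b i n σ * ker ε b n σ τ) * Ssum τ
        = ∑ σ : (Fin n → Fin b) → Bool, levelDist (bsc ε) b i n σ *
            ∑ τ : (Fin (n+1) → Fin b) → Bool, ker ε b n σ τ * Ssum τ := by
      simp only [Finset.sum_mul]
      rw [Finset.sum_comm]
      refine Finset.sum_congr rfl fun σ _ => ?_
      rw [Finset.mul_sum]
      exact Finset.sum_congr rfl fun τ _ => by ring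
    rw [swap]
    have inner : ∀ σ : (Fin n → Fin b) → Bool,
        ∑ τ : (Fin (n+1) → Fin b) → Bool, ker ε b n σ τ * Ssum τ
          = ((b:ℝ) * (1 - 2*ε)) * Ssum σ := by
      intro σ
      have : ∀ τ : (Fin (n+1) → Fin b) → Bool, ker ε b n σ τ * Ssum τ
          = ∑ w : Fin (n+1) → Fin b, ker ε b n σ τ * sgn (τ w) := by
        intro τ; rw [Ssum, Finset.mul_sum]
      rw [Fintype.sum_congr _ _ this, Finset.sum_comm,
        Finset.sum_congr rfl fun w (_ : w ∈ Finset.univ) => ker_sgn ε b n σ w,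
        ← Finset.mul_sum, sum_init (fun v => sgn (σ v))]
      show (1 - 2*ε) * ((b:ℝ) * Ssum σ) = _
      ring
    rw [Finset.sum_congr rfl fun σ _ => by rw [inner σ]]
    have : ∀ σ : (Fin n → Fin b) → Bool,
        levelDist (bsc ε) b i n σ * (((b:ℝ) * (1 - 2*ε)) * Ssum σ)
          = ((b:ℝ) * (1 - 2*ε)) * (levelDist (bsc ε) b i n σ * Ssum σ) := fun σ => by ring
    rw [Finset.sum_congr rfl fun σ _ => this σ, ← Finset.mul_sum, ih]
    ring

lemma levelDist_sq_succ (ε : ℝ) (b : ℕ) (i : Bool) (n : ℕ) :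
    ∑ τ : (Fin (n+1) → Fin b) → Bool, levelDist (bsc ε) b i (n+1) τ * (Ssum τ)^2
      = (1 - (1-2*ε)^2) * (b:ℝ)^(n+1)
        + (1-2*ε)^2 * (b:ℝ)^2 *
            ∑ σ : (Fin n → Fin b) → Bool, levelDist (bsc ε) b i n σ * (Ssum σ)^2 := by
  simp only [levelDist_succ]
  have swap : ∑ τ : (Fin (n+1) → Fin b) → Bool,
      (∑ σ : (Fin n → Fin b) → Bool, levelDist (bsc ε) b i n σ * ker ε b n σ τ) * (Ssum τ)^2
      = ∑ σ : (Fin n → Fin b) → Bool, levelDist (bsc ε) b i n σ *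
          ∑ τ : (Fin (n+1) → Fin b) → Bool, ker ε b n σ τ * (Ssum τ)^2 := by
    simp only [Finset.sum_mul]
    rw [Finset.sum_comm]
    refine Finset.sum_congr rfl fun σ _ => ?_
    rw [Finset.mul_sum]
    exact Finset.sum_congr rfl fun τ _ => by ring
  rw [swap, Finset.sum_congr rfl fun σ (_ : σ ∈ Finset.univ) => by rw [ker_S2 ε b n σ]]
  have expand : ∀ σ : (Fin n → Fin b) → Bool,
      levelDist (bsc ε) b i n σ *
        ((1 - (1-2*ε)^2) * (b:ℝ)^(n+1) + (1-2*ε)^2 * ((b:ℝ) * Ssum σ)^2)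
      = ((1 - (1-2*ε)^2) * (b:ℝ)^(n+1)) * levelDist (bsc ε) b i n σ
        + ((1-2*ε)^2 * (b:ℝ)^2) * (levelDist (bsc ε) b i n σ * (Ssum σ)^2) := by
    intro σ; ring
  rw [Finset.sum_congr rfl fun σ _ => expand σ, Finset.sum_add_distrib,
    ← Finset.mul_sum, ← Finset.mul_sum, levelDist_sum, mul_one]

lemma levelDist_sq_zero (ε : ℝ) (b : ℕ) (i : Bool) :
    ∑ σ : (Fin 0 → Fin b) → Bool, levelDist (bsc ε) b i 0 σ * (Ssum σ)^2 = 1 := by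
  rw [Fintype.sum_eq_single (fun _ => i)]
  · simp only [levelDist, if_pos rfl, one_mul, Ssum]
    have : ∑ p : Fin 0 → Fin b, sgn ((fun _ => i) p) = sgn i := by
      simp [Finset.sum_const, Finset.card_univ]
    rw [this]; cases i <;> simp [sgn]
  · intro σ hσ; simp only [levelDist]; rw [if_neg hσ, zero_mul]

lemma levelDist_sq_le {ε : ℝ} {b : ℕ} (hε0 : 0 < ε) (hε1 : ε < 1)
    (h : 1 < (b:ℝ) * (1 - 2*ε)^2) (i : Bool) (n : ℕ) :
    ∑ σ : (Fin n → Fin b) → Bool, levelDist (bsc ε) b i n σ * (Ssum σ)^2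
      ≤ (1 + (1 - (1-2*ε)^2) / ((b:ℝ) * (1-2*ε)^2 - 1)) * ((b:ℝ)^2 * (1-2*ε)^2)^n
        - ((1 - (1-2*ε)^2) / ((b:ℝ) * (1-2*ε)^2 - 1)) * (b:ℝ)^n := by
  set L : ℝ := (1-2*ε)^2 with hL
  set B : ℝ := (b:ℝ) with hB
  have hBL : 0 < B * L - 1 := by linarith
  set D : ℝ := (1 - L) / (B * L - 1) with hD
  have hL1 : L ≤ 1 := by nlinarith
  have hL0 : 0 ≤ L := sq_nonneg _
  have hD0 : 0 ≤ D := div_nonneg (by linarith) hBL.le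
  have hDeq : D * (B * L - 1) = 1 - L := div_mul_cancel₀ _ hBL.ne'
  have hB0 : (0:ℝ) ≤ B := by positivity
  induction n with
  | zero => rw [levelDist_sq_zero]; simp
  | succ n ih =>
    rw [levelDist_sq_succ]
    have hBn : (0:ℝ) ≤ B^n := by positivity
    have hM : (0:ℝ) ≤ (B^2*L)^n := by positivity
    have step := mul_le_mul_of_nonneg_left ih (by positivity : (0:ℝ) ≤ L * B^2)
    rw [pow_succ (B^2*L), pow_succ B]
    have key : D*(B*L-1)*(B*B^n) = (1-L)*(B*B^n) := by rw [hDeq]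
    simp only [← hL, ← hB]
    nlinarith [step, key]

/-- Cauchy–Schwarz style bound for total variation. -/
lemma sq_sum_le_tv {Ω : Type*} (s : Finset Ω) (X p q : Ω → ℝ)
    (hp : ∀ σ ∈ s, 0 ≤ p σ) (hq : ∀ σ ∈ s, 0 ≤ q σ) :
    (∑ σ ∈ s, X σ * (p σ - q σ))^2
      ≤ (∑ σ ∈ s, X σ^2 * (p σ + q σ)) * ∑ σ ∈ s, |p σ - q σ| := by
  have habs : |∑ σ ∈ s, X σ * (p σ - q σ)| ≤ ∑ σ ∈ s, |X σ| * |p σ - q σ| := by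
    refine (Finset.abs_sum_le_sum_abs _ _).trans ?_
    exact Finset.sum_le_sum fun σ _ => le_of_eq (abs_mul _ _)
  have h1 : (∑ σ ∈ s, X σ * (p σ - q σ))^2 ≤ (∑ σ ∈ s, |X σ| * |p σ - q σ|)^2 := by
    rw [← sq_abs (∑ σ ∈ s, X σ * (p σ - q σ))]
    exact pow_le_pow_left₀ (abs_nonneg _) habs 2
  refine h1.trans ?_
  set f : Ω → ℝ := fun σ => |X σ| * Real.sqrt (p σ + q σ) with hf
  set g : Ω → ℝ := fun σ => |p σ - q σ| / Real.sqrt (p σ + q σ) with hg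
  have hfg : ∀ σ ∈ s, |X σ| * |p σ - q σ| = f σ * g σ := by
    intro σ hσ
    rcases eq_or_lt_of_le (add_nonneg (hp σ hσ) (hq σ hσ)) with h0 | h0
    · have hp0 : p σ = 0 := by nlinarith [hp σ hσ, hq σ hσ]
      have hq0 : q σ = 0 := by nlinarith [hp σ hσ, hq σ hσ]
      simp [hf, hg, hp0, hq0]
    · have hs0 : Real.sqrt (p σ + q σ) ≠ 0 := by
        positivity
      simp only [hf, hg]
      field_simp
  rw [Finset.sum_congr rfl hfg]
  refine (Finset.sum_mul_sq_le_sq_mul_sq s f g).trans ?_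
  have hf2 : ∀ σ ∈ s, f σ^2 = X σ^2 * (p σ + q σ) := by
    intro σ hσ
    rw [hf]; simp only [mul_pow, sq_abs, Real.sq_sqrt (add_nonneg (hp σ hσ) (hq σ hσ))]
  have hg2 : ∀ σ ∈ s, g σ^2 ≤ |p σ - q σ| := by
    intro σ hσ
    rw [hg]
    simp only [div_pow, sq_abs, Real.sq_sqrt (add_nonneg (hp σ hσ) (hq σ hσ))]
    rcases eq_or_lt_of_le (add_nonneg (hp σ hσ) (hq σ hσ)) with h0 | h0
    · rw [← h0, div_zero]; exact abs_nonneg _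
    · rw [div_le_iff₀ h0, ← sq_abs (p σ - q σ), sq]
      refine mul_le_mul_of_nonneg_left ?_ (abs_nonneg _)
      calc |p σ - q σ| ≤ |p σ| + |q σ| := abs_sub _ _
        _ = p σ + q σ := by rw [abs_of_nonneg (hp σ hσ), abs_of_nonneg (hq σ hσ)]
  rw [Finset.sum_congr rfl hf2]
  exact mul_le_mul_of_nonneg_left (Finset.sum_le_sum hg2)
    (Finset.sum_nonneg fun σ hσ => mul_nonneg (sq_nonneg _)
      (add_nonneg (hp σ hσ) (hq σ hσ)))

lemma tv_lb_of_moments {Ω : Type*} (s : Finset Ω) (X p q : Ω → ℝ)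
    (hp : ∀ σ ∈ s, 0 ≤ p σ) (hq : ∀ σ ∈ s, 0 ≤ q σ)
    (m2 C : ℝ) (hm2 : 0 < m2) (hC : 0 < C)
    (hmean : (∑ σ ∈ s, X σ * (p σ - q σ))^2 = 4 * m2)
    (hsq : ∑ σ ∈ s, X σ^2 * (p σ + q σ) ≤ 2 * C * m2) :
    2 / C ≤ ∑ σ ∈ s, |p σ - q σ| := by
  have hT : 0 ≤ ∑ σ ∈ s, |p σ - q σ| := Finset.sum_nonneg fun _ _ => abs_nonneg _
  have hcs := sq_sum_le_tv s X p q hp hq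
  rw [hmean] at hcs
  rw [div_le_iff₀ hC]
  nlinarith [mul_le_mul_of_nonneg_right hsq hT, hcs]

lemma tv_step {ε : ℝ} (h0 : 0 ≤ ε) (h1 : ε ≤ 1) (b : ℕ) (i j : Bool) (n : ℕ) :
    ∑ τ : (Fin (n+1) → Fin b) → Bool,
        |levelDist (bsc ε) b i (n+1) τ - levelDist (bsc ε) b j (n+1) τ|
      ≤ ∑ σ : (Fin n → Fin b) → Bool,
          |levelDist (bsc ε) b i n σ - levelDist (bsc ε) b j n σ| := by
  have hτ : ∀ τ : (Fin (n+1) → Fin b) → Bool,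
      |levelDist (bsc ε) b i (n+1) τ - levelDist (bsc ε) b j (n+1) τ|
        ≤ ∑ σ : (Fin n → Fin b) → Bool,
            |levelDist (bsc ε) b i n σ - levelDist (bsc ε) b j n σ| * ker ε b n σ τ := by
    intro τ
    rw [levelDist_succ, levelDist_succ, ← Finset.sum_sub_distrib]
    refine (Finset.abs_sum_le_sum_abs _ _).trans ?_
    refine Finset.sum_le_sum fun σ _ => ?_
    rw [← sub_mul, abs_mul, abs_of_nonneg (ker_nonneg h0 h1 b n σ τ)]
  refine (Finset.sum_le_sum fun τ (_ : τ ∈ Finset.univ) => hτ τ).trans ?_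
  rw [Finset.sum_comm]
  refine le_of_eq (Finset.sum_congr rfl fun σ _ => ?_)
  rw [← Finset.mul_sum, ker_sum, mul_one]

lemma tv_antitone {ε : ℝ} (h0 : 0 ≤ ε) (h1 : ε ≤ 1) (b : ℕ) (i j : Bool) :
    Antitone (fun n => tvDist (levelDist (bsc ε) b i n) (levelDist (bsc ε) b j n)) := by
  refine antitone_nat_of_succ_le fun n => ?_
  unfold tvDist
  have := tv_step h0 h1 b i j n
  linarith

lemma tv_lower {ε : ℝ} {b : ℕ} (hε0 : 0 < ε) (hε1 : ε < 1)
    (h : 1 < (b:ℝ) * (1 - 2*ε)^2) (n : ℕ) :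
    2 / (1 + (1 - (1-2*ε)^2) / ((b:ℝ) * (1-2*ε)^2 - 1))
      ≤ ∑ σ : (Fin n → Fin b) → Bool,
          |levelDist (bsc ε) b true n σ - levelDist (bsc ε) b false n σ| := by
  have hL0 : (0:ℝ) < (1-2*ε)^2 := by nlinarith [Nat.cast_nonneg (α := ℝ) b]
  have hB0 : (0:ℝ) < (b:ℝ) := by nlinarith [sq_nonneg (1-2*ε)]
  have hBL : (0:ℝ) < (b:ℝ) * (1-2*ε)^2 - 1 := by linarith
  have hL1 : (1-2*ε)^2 ≤ 1 := by nlinarith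
  set D : ℝ := (1 - (1-2*ε)^2) / ((b:ℝ) * (1-2*ε)^2 - 1) with hD
  have hD0 : 0 ≤ D := div_nonneg (by linarith) hBL.le
  have hC : (0:ℝ) < 1 + D := by linarith
  have hm2 : (0:ℝ) < ((b:ℝ)^2 * (1-2*ε)^2)^n := by positivity
  refine tv_lb_of_moments Finset.univ Ssum _ _
    (fun σ _ => levelDist_nonneg hε0.le hε1.le b true n σ)
    (fun σ _ => levelDist_nonneg hε0.le hε1.le b false n σ)
    (((b:ℝ)^2 * (1-2*ε)^2)^n) (1 + D) hm2 hC ?_ ?_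
  · have e1 := levelDist_mean ε b true n
    have e2 := levelDist_mean ε b false n
    have hsplit : ∑ σ : (Fin n → Fin b) → Bool,
        Ssum σ * (levelDist (bsc ε) b true n σ - levelDist (bsc ε) b false n σ)
          = (∑ σ : (Fin n → Fin b) → Bool, levelDist (bsc ε) b true n σ * Ssum σ)
            - ∑ σ : (Fin n → Fin b) → Bool, levelDist (bsc ε) b false n σ * Ssum σ := by
      rw [← Finset.sum_sub_distrib]
      exact Finset.sum_congr rfl fun σ _ => by ring
    rw [hsplit, e1, e2]
    have hx : (((b:ℝ) * (1 - 2*ε))^n)^2 = ((b:ℝ)^2*(1-2*ε)^2)^n := by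
      rw [← mul_pow, ← pow_mul, mul_comm n 2, pow_mul]
    have hs1 : sgn true = 1 := rfl
    have hs2 : sgn false = -1 := rfl
    have hy : sgn true * ((b:ℝ) * (1 - 2*ε))^n - sgn false * ((b:ℝ) * (1 - 2*ε))^n
        = 2 * ((b:ℝ) * (1 - 2*ε))^n := by rw [hs1, hs2]; ring
    rw [hy, mul_pow, hx]
    norm_num
  · have b1 := levelDist_sq_le hε0 hε1 h true n
    have b2 := levelDist_sq_le hε0 hε1 h false n
    have hBn : (0:ℝ) ≤ ((b:ℝ))^n := by positivity
    have expand : ∀ σ : (Fin n → Fin b) → Bool,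
        Ssum σ^2 * (levelDist (bsc ε) b true n σ + levelDist (bsc ε) b false n σ)
          = levelDist (bsc ε) b true n σ * Ssum σ^2
            + levelDist (bsc ε) b false n σ * Ssum σ^2 := fun σ => by ring
    rw [Finset.sum_congr rfl fun σ _ => expand σ, Finset.sum_add_distrib]
    rw [← hD] at b1 b2
    linarith [b1, b2, mul_nonneg hD0 hBn]

lemma perm_of_count_eq {V : Type*} [Fintype V] [DecidableEq V] {σ σ' : V → Bool}
    (h : (Finset.univ.filter fun v => σ v = true).card
       = (Finset.univ.filter fun v => σ' v = true).card) :
    ∃ e : Equiv.Perm V, ∀ v, σ (e v) = σ' v := by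
  have h1 : Fintype.card {v // σ' v = true} = Fintype.card {v // σ v = true} := by
    rw [Fintype.card_subtype, Fintype.card_subtype, h]
  have h2 : Fintype.card {v // ¬ σ' v = true} = Fintype.card {v // ¬ σ v = true} := by
    rw [Fintype.card_subtype_compl, Fintype.card_subtype_compl, h1]
  let e₁ := Fintype.equivOfCardEq h1
  let e₂ := Fintype.equivOfCardEq h2
  refine ⟨(Equiv.sumCompl fun v => σ' v = true).symm.trans
    ((e₁.sumCongr e₂).trans (Equiv.sumCompl fun v => σ v = true)), fun v => ?_⟩
  by_cases hv : σ' v = true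
  · rw [Equiv.trans_apply, Equiv.trans_apply,
      Equiv.sumCompl_symm_apply_of_pos (p := fun v => σ' v = true) hv, Equiv.sumCongr_apply, Sum.map_inl,
      Equiv.sumCompl_apply_inl]
    rw [(e₁ ⟨v, hv⟩).2, hv]
  · rw [Equiv.trans_apply, Equiv.trans_apply,
      Equiv.sumCompl_symm_apply_of_neg (p := fun v => σ' v = true) hv, Equiv.sumCongr_apply, Sum.map_inr,
      Equiv.sumCompl_apply_inr]
    have := (e₂ ⟨v, hv⟩).2
    rw [Bool.not_eq_true] at this hv
    rw [this, hv]

def liftPerm {b n : ℕ} (e : Equiv.Perm (Fin n → Fin b)) :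
    Equiv.Perm (Fin (n+1) → Fin b) where
  toFun w := Fin.snoc (e (Fin.init w)) (w (Fin.last n))
  invFun w := Fin.snoc (e.symm (Fin.init w)) (w (Fin.last n))
  left_inv w := by
    simp only [Fin.init_snoc, Fin.snoc_last, Equiv.symm_apply_apply]
    exact Fin.snoc_init_self w
  right_inv w := by
    simp only [Fin.init_snoc, Fin.snoc_last, Equiv.apply_symm_apply]
    exact Fin.snoc_init_self w

lemma liftPerm_init {b n : ℕ} (e : Equiv.Perm (Fin n → Fin b)) (w : Fin (n+1) → Fin b) :
    Fin.init (liftPerm e w) = e (Fin.init w) := by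
  simp [liftPerm, Fin.init_snoc]

lemma census_comp_perm {b n : ℕ} (E : Equiv.Perm (Fin n → Fin b))
    (τ : (Fin n → Fin b) → Bool) : census (fun w => τ (E w)) = census τ := by
  funext j
  unfold census
  exact Finset.card_equiv E (fun p => by simp)

noncomputable def Gker (ε : ℝ) (b n : ℕ) (σ : (Fin n → Fin b) → Bool) (c : Bool → ℕ) : ℝ :=
  ∑ τ : (Fin (n+1) → Fin b) → Bool, if census τ = c then ker ε b n σ τ else 0

lemma Gker_nonneg {ε : ℝ} (h0 : 0 ≤ ε) (h1 : ε ≤ 1) (b n : ℕ) (σ) (c) :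
    0 ≤ Gker ε b n σ c := by
  refine Finset.sum_nonneg fun τ _ => ?_
  split
  · exact ker_nonneg h0 h1 b n σ τ
  · exact le_refl 0

lemma Gker_census_eq {ε : ℝ} {b n : ℕ} {σ σ' : (Fin n → Fin b) → Bool}
    (h : census σ = census σ') (c : Bool → ℕ) :
    Gker ε b n σ c = Gker ε b n σ' c := by
  obtain ⟨e, he⟩ := perm_of_count_eq (σ := σ) (σ' := σ')
    (by have := congrFun h true; unfold census at this; exact this)
  set E := liftPerm e with hE
  have key : ∀ τ : (Fin (n+1) → Fin b) → Bool,
      (if census τ = c then ker ε b n σ' τ else 0)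
      = (if census (fun u => τ (E.symm u)) = c
          then ker ε b n σ (fun u => τ (E.symm u)) else 0) := by
    intro τ
    rw [census_comp_perm E.symm τ]
    congr 1
    show _ = ∏ w : Fin (n+1) → Fin b, bsc ε (σ (Fin.init w)) (τ (E.symm w))
    rw [← Equiv.prod_comp E (fun w => bsc ε (σ (Fin.init w)) (τ (E.symm w)))]
    refine Finset.prod_congr rfl fun w _ => ?_
    rw [Equiv.symm_apply_apply, hE, liftPerm_init, he]
  exact (Fintype.sum_equiv (Equiv.arrowCongr E (Equiv.refl Bool))
    (fun τ => if census τ = c then ker ε b n σ' τ else 0)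
    (fun τ' => if census τ' = c then ker ε b n σ τ' else 0) key).symm

lemma censusDist_nonneg {ε : ℝ} (h0 : 0 ≤ ε) (h1 : ε ≤ 1) (b : ℕ) (i : Bool) (n : ℕ)
    (c : Bool → ℕ) : 0 ≤ censusDist (bsc ε) b i n c := by
  refine Finset.sum_nonneg fun σ _ => ?_
  split
  · exact levelDist_nonneg h0 h1 b i n σ
  · exact le_refl 0

lemma censusDist_eq_zero (ε : ℝ) {b n : ℕ} (i : Bool) {c : Bool → ℕ}
    (hc : c ∉ Finset.image census (Finset.univ : Finset ((Fin n → Fin b) → Bool))) :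
    censusDist (bsc ε) b i n c = 0 := by
  refine Finset.sum_eq_zero fun σ _ => ?_
  rw [if_neg]
  intro hσ
  exact hc (hσ ▸ Finset.mem_image_of_mem census (Finset.mem_univ σ))

lemma sum_census_phi (ε : ℝ) (b : ℕ) (i : Bool) (n : ℕ) (φ : (Bool → ℕ) → ℝ) :
    ∑ c ∈ Finset.image census (Finset.univ : Finset ((Fin n → Fin b) → Bool)),
      φ c * censusDist (bsc ε) b i n c
    = ∑ σ : (Fin n → Fin b) → Bool, levelDist (bsc ε) b i n σ * φ (census σ) := by
  unfold censusDist
  simp only [Finset.mul_sum]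
  rw [Finset.sum_comm]
  refine Finset.sum_congr rfl fun σ _ => ?_
  have : ∀ c ∈ Finset.image census (Finset.univ : Finset ((Fin n → Fin b) → Bool)),
      φ c * (if census σ = c then levelDist (bsc ε) b i n σ else 0)
        = (if census σ = c then φ c * levelDist (bsc ε) b i n σ else 0) := by
    intro c _; split <;> simp
  rw [Finset.sum_congr rfl this, Finset.sum_ite_eq,
    if_pos (Finset.mem_image_of_mem census (Finset.mem_univ σ)), mul_comm]

noncomputable def repConf (b n : ℕ) (c : Bool → ℕ) : (Fin n → Fin b) → Bool :=
  Classical.epsilon (fun σ : (Fin n → Fin b) → Bool => census σ = c)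

lemma repConf_census {b n : ℕ} {c : Bool → ℕ}
    (h : ∃ σ : (Fin n → Fin b) → Bool, census σ = c) :
    census (repConf b n c) = c :=
  Classical.epsilon_spec h

lemma censusDist_succ (ε : ℝ) (b : ℕ) (i : Bool) (n : ℕ) (c : Bool → ℕ) :
    censusDist (bsc ε) b i (n+1) c
      = ∑ σ : (Fin n → Fin b) → Bool, levelDist (bsc ε) b i n σ * Gker ε b n σ c := by
  unfold censusDist
  have key : ∀ τ : (Fin (n+1) → Fin b) → Bool,
      (if census τ = c then levelDist (bsc ε) b i (n+1) τ else 0)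
      = ∑ σ : (Fin n → Fin b) → Bool,
          levelDist (bsc ε) b i n σ * (if census τ = c then ker ε b n σ τ else 0) := by
    intro τ
    split
    · exact levelDist_succ ε b i n τ
    · simp
  rw [Finset.sum_congr rfl fun τ _ => key τ, Finset.sum_comm]
  exact Finset.sum_congr rfl fun σ _ => by rw [← Finset.mul_sum]; rfl

lemma censusDist_succ' (ε : ℝ) (b : ℕ) (i : Bool) (n : ℕ) (c' : Bool → ℕ) :
    censusDist (bsc ε) b i (n+1) c'
      = ∑ c ∈ Finset.image census (Finset.univ : Finset ((Fin n → Fin b) → Bool)),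
          Gker ε b n (repConf b n c) c' * censusDist (bsc ε) b i n c := by
  rw [censusDist_succ, sum_census_phi ε b i n (fun c => Gker ε b n (repConf b n c) c')]
  refine Finset.sum_congr rfl fun σ _ => ?_
  congr 1
  exact Gker_census_eq ((repConf_census ⟨σ, rfl⟩).symm) c'

lemma Gker_sum {ε : ℝ} (b n : ℕ) (σ : (Fin n → Fin b) → Bool) :
    ∑ c ∈ Finset.image census (Finset.univ : Finset ((Fin (n+1) → Fin b) → Bool)),
      Gker ε b n σ c = 1 := by
  unfold Gker
  rw [Finset.sum_comm]
  have : ∀ τ : (Fin (n+1) → Fin b) → Bool,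
      ∑ c ∈ Finset.image census (Finset.univ : Finset ((Fin (n+1) → Fin b) → Bool)),
        (if census τ = c then ker ε b n σ τ else 0) = ker ε b n σ τ := by
    intro τ
    rw [Finset.sum_ite_eq, if_pos (Finset.mem_image_of_mem census (Finset.mem_univ τ))]
  rw [Finset.sum_congr rfl fun τ _ => this τ, ker_sum]

lemma censusAbs_step {ε : ℝ} (h0 : 0 ≤ ε) (h1 : ε ≤ 1) (b : ℕ) (i j : Bool) (n : ℕ) :
    ∑ c ∈ Finset.image census (Finset.univ : Finset ((Fin (n+1) → Fin b) → Bool)),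
        |censusDist (bsc ε) b i (n+1) c - censusDist (bsc ε) b j (n+1) c|
      ≤ ∑ c ∈ Finset.image census (Finset.univ : Finset ((Fin n → Fin b) → Bool)),
          |censusDist (bsc ε) b i n c - censusDist (bsc ε) b j n c| := by
  have hstep : ∀ c' : Bool → ℕ,
      |censusDist (bsc ε) b i (n+1) c' - censusDist (bsc ε) b j (n+1) c'|
        ≤ ∑ c ∈ Finset.image census (Finset.univ : Finset ((Fin n → Fin b) → Bool)),
            |censusDist (bsc ε) b i n c - censusDist (bsc ε) b j n c|
              * Gker ε b n (repConf b n c) c' := by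
    intro c'
    rw [censusDist_succ', censusDist_succ', ← Finset.sum_sub_distrib]
    refine (Finset.abs_sum_le_sum_abs _ _).trans ?_
    refine Finset.sum_le_sum fun c _ => ?_
    rw [← mul_sub, abs_mul, abs_of_nonneg (Gker_nonneg h0 h1 b n _ c'), mul_comm]
  refine (Finset.sum_le_sum fun c' _ => hstep c').trans ?_
  rw [Finset.sum_comm]
  refine le_of_eq (Finset.sum_congr rfl fun c _ => ?_)
  rw [← Finset.mul_sum, Gker_sum, mul_one]

lemma censusTV_eq (ε : ℝ) (b : ℕ) (i j : Bool) (n : ℕ) :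
    censusTV (bsc ε) b i j n
      = (1/2) * ∑ c ∈ Finset.image census (Finset.univ : Finset ((Fin n → Fin b) → Bool)),
          |censusDist (bsc ε) b i n c - censusDist (bsc ε) b j n c| := by
  unfold censusTV
  congr 1
  refine tsum_eq_sum ?_
  intro c hc
  rw [censusDist_eq_zero ε i hc, censusDist_eq_zero ε j hc, sub_zero, abs_zero]

lemma censusTV_antitone {ε : ℝ} (h0 : 0 ≤ ε) (h1 : ε ≤ 1) (b : ℕ) (i j : Bool) :
    Antitone (fun n => censusTV (bsc ε) b i j n) := by
  refine antitone_nat_of_succ_le fun n => ?_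
  rw [censusTV_eq, censusTV_eq]
  have := censusAbs_step h0 h1 b i j n
  linarith

lemma Ssum_census {b n : ℕ} (σ : (Fin n → Fin b) → Bool) :
    Ssum σ = ((census σ true : ℝ)) - ((census σ false : ℝ)) := by
  unfold Ssum census
  rw [← Finset.sum_filter_add_sum_filter_not Finset.univ (fun p => σ p = true)]
  have h1 : ∑ p ∈ Finset.univ.filter (fun p => σ p = true), sgn (σ p)
      = ((Finset.univ.filter fun p => σ p = true).card : ℝ) := by
    rw [Finset.sum_congr rfl fun p hp => ?_, Finset.sum_const, nsmul_eq_mul, mul_one]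
    rw [(Finset.mem_filter.mp hp).2]
    rfl
  have h2 : ∑ p ∈ Finset.univ.filter (fun p => ¬ σ p = true), sgn (σ p)
      = -((Finset.univ.filter fun p => σ p = false).card : ℝ) := by
    have hfil : Finset.univ.filter (fun p : Fin n → Fin b => ¬ σ p = true)
        = Finset.univ.filter (fun p => σ p = false) := by
      refine Finset.filter_congr fun p _ => ?_
      simp [Bool.not_eq_true]
    rw [hfil, Finset.sum_congr rfl fun p hp => ?_, Finset.sum_const, nsmul_eq_mul, mul_neg_one]
    rw [(Finset.mem_filter.mp hp).2]
    rfl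
  rw [h1, h2]
  ring

lemma censusTV_lower {ε : ℝ} {b : ℕ} (hε0 : 0 < ε) (hε1 : ε < 1)
    (h : 1 < (b:ℝ) * (1 - 2*ε)^2) (n : ℕ) :
    2 / (1 + (1 - (1-2*ε)^2) / ((b:ℝ) * (1-2*ε)^2 - 1))
      ≤ ∑ c ∈ Finset.image census (Finset.univ : Finset ((Fin n → Fin b) → Bool)),
          |censusDist (bsc ε) b true n c - censusDist (bsc ε) b false n c| := by
  have hL0 : (0:ℝ) < (1-2*ε)^2 := by nlinarith [Nat.cast_nonneg (α := ℝ) b]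
  have hB0 : (0:ℝ) < (b:ℝ) := by nlinarith [sq_nonneg (1-2*ε)]
  have hBL : (0:ℝ) < (b:ℝ) * (1-2*ε)^2 - 1 := by linarith
  have hL1 : (1-2*ε)^2 ≤ 1 := by nlinarith
  set D : ℝ := (1 - (1-2*ε)^2) / ((b:ℝ) * (1-2*ε)^2 - 1) with hD
  have hD0 : 0 ≤ D := div_nonneg (by linarith) hBL.le
  have hC : (0:ℝ) < 1 + D := by linarith
  have hm2 : (0:ℝ) < ((b:ℝ)^2 * (1-2*ε)^2)^n :=
    pow_pos (mul_pos (pow_pos hB0 2) hL0) n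
  set φ : (Bool → ℕ) → ℝ := fun c => ((c true : ℝ)) - ((c false : ℝ)) with hφ
  have hφc : ∀ σ : (Fin n → Fin b) → Bool, φ (census σ) = Ssum σ :=
    fun σ => (Ssum_census σ).symm
  refine tv_lb_of_moments _ φ _ _
    (fun c _ => censusDist_nonneg hε0.le hε1.le b true n c)
    (fun c _ => censusDist_nonneg hε0.le hε1.le b false n c)
    (((b:ℝ)^2 * (1-2*ε)^2)^n) (1 + D) hm2 hC ?_ ?_
  · have hsplit : ∑ c ∈ Finset.image census
        (Finset.univ : Finset ((Fin n → Fin b) → Bool)),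
        φ c * (censusDist (bsc ε) b true n c - censusDist (bsc ε) b false n c)
          = (∑ c ∈ Finset.image census
              (Finset.univ : Finset ((Fin n → Fin b) → Bool)),
              φ c * censusDist (bsc ε) b true n c)
            - ∑ c ∈ Finset.image census
                (Finset.univ : Finset ((Fin n → Fin b) → Bool)),
                φ c * censusDist (bsc ε) b false n c := by
      rw [← Finset.sum_sub_distrib]
      exact Finset.sum_congr rfl fun c _ => by ring
    have m1 : ∑ σ : (Fin n → Fin b) → Bool, levelDist (bsc ε) b true n σ * φ (census σ)
        = ∑ σ : (Fin n → Fin b) → Bool, levelDist (bsc ε) b true n σ * Ssum σ :=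
      Finset.sum_congr rfl fun σ _ => by rw [hφc σ]
    have m2 : ∑ σ : (Fin n → Fin b) → Bool, levelDist (bsc ε) b false n σ * φ (census σ)
        = ∑ σ : (Fin n → Fin b) → Bool, levelDist (bsc ε) b false n σ * Ssum σ :=
      Finset.sum_congr rfl fun σ _ => by rw [hφc σ]
    rw [hsplit, sum_census_phi ε b true n φ, sum_census_phi ε b false n φ, m1, m2,
      levelDist_mean ε b true n, levelDist_mean ε b false n]
    have hx : (((b:ℝ) * (1 - 2*ε))^n)^2 = ((b:ℝ)^2*(1-2*ε)^2)^n := by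
      rw [← mul_pow, ← pow_mul, mul_comm n 2, pow_mul]
    have hs1 : sgn true = 1 := rfl
    have hs2 : sgn false = -1 := rfl
    have hy : sgn true * ((b:ℝ) * (1 - 2*ε))^n - sgn false * ((b:ℝ) * (1 - 2*ε))^n
        = 2 * ((b:ℝ) * (1 - 2*ε))^n := by rw [hs1, hs2]; ring
    rw [hy, mul_pow, hx]
    norm_num
  · have hsplit : ∑ c ∈ Finset.image census
        (Finset.univ : Finset ((Fin n → Fin b) → Bool)),
        φ c ^ 2 * (censusDist (bsc ε) b true n c + censusDist (bsc ε) b false n c)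
          = (∑ c ∈ Finset.image census
              (Finset.univ : Finset ((Fin n → Fin b) → Bool)),
              (fun c => φ c ^ 2) c * censusDist (bsc ε) b true n c)
            + ∑ c ∈ Finset.image census
                (Finset.univ : Finset ((Fin n → Fin b) → Bool)),
                (fun c => φ c ^ 2) c * censusDist (bsc ε) b false n c := by
      rw [← Finset.sum_add_distrib]
      exact Finset.sum_congr rfl fun c _ => by ring
    have m1 : ∑ σ : (Fin n → Fin b) → Bool,
        levelDist (bsc ε) b true n σ * (fun c => φ c ^ 2) (census σ)
        = ∑ σ : (Fin n → Fin b) → Bool, levelDist (bsc ε) b true n σ * Ssum σ ^ 2 :=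
      Finset.sum_congr rfl fun σ _ => by
        show levelDist (bsc ε) b true n σ * φ (census σ) ^ 2 = _
        rw [hφc σ]
    have m2 : ∑ σ : (Fin n → Fin b) → Bool,
        levelDist (bsc ε) b false n σ * (fun c => φ c ^ 2) (census σ)
        = ∑ σ : (Fin n → Fin b) → Bool, levelDist (bsc ε) b false n σ * Ssum σ ^ 2 :=
      Finset.sum_congr rfl fun σ _ => by
        show levelDist (bsc ε) b false n σ * φ (census σ) ^ 2 = _
        rw [hφc σ]
    rw [hsplit, sum_census_phi ε b true n (fun c => φ c ^ 2),
      sum_census_phi ε b false n (fun c => φ c ^ 2), m1, m2]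
    have b1 := levelDist_sq_le hε0 hε1 h true n
    have b2 := levelDist_sq_le hε0 hε1 h false n
    have hBn : (0:ℝ) ≤ ((b:ℝ))^n := by positivity
    rw [← hD] at b1 b2
    linarith [b1, b2, mul_nonneg hD0 hBn]

end BSCaux

/-- If `b (1-2ε)² > 1` then the reconstruction problem for the `b`-ary tree and
the binary symmetric channel with error probability `ε` is solvable, and moreover
census solvable. -/
theorem bsc_reconstruction_and_census_solvable (b : ℕ) (hb : 2 ≤ b) (ε : ℝ)
    (hε0 : 0 < ε) (hε1 : ε < 1) (h : 1 < (b : ℝ) * (1 - 2 * ε) ^ 2) :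
    (∃ i j : Bool, ∃ L > 0, Tendsto
      (fun n => tvDist (levelDist (bsc ε) b i n) (levelDist (bsc ε) b j n))
      atTop (nhds L)) ∧
    (∃ i j : Bool, ∃ L > 0, Tendsto
      (fun n => censusTV (bsc ε) b i j n) atTop (nhds L)) := by
  set C : ℝ := 1 + (1 - (1-2*ε)^2) / ((b:ℝ) * (1-2*ε)^2 - 1) with hCdef
  have hL0 : (0:ℝ) < (1-2*ε)^2 := by nlinarith [Nat.cast_nonneg (α := ℝ) b]
  have hBL : (0:ℝ) < (b:ℝ) * (1-2*ε)^2 - 1 := by linarith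
  have hL1 : (1-2*ε)^2 ≤ 1 := by nlinarith
  have hC : (0:ℝ) < C := by
    have h0 : 0 ≤ (1 - (1-2*ε)^2) / ((b:ℝ)*(1-2*ε)^2 - 1) := div_nonneg (by linarith) hBL.le
    rw [hCdef]; linarith
  constructor
  · have hanti : Antitone
        (fun n => tvDist (levelDist (bsc ε) b true n) (levelDist (bsc ε) b false n)) :=
      tv_antitone hε0.le hε1.le b true false
    have hlb : ∀ n, 1 / C
        ≤ tvDist (levelDist (bsc ε) b true n) (levelDist (bsc ε) b false n) := by
      intro n
      have h2 := tv_lower hε0 hε1 h n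
      rw [← hCdef] at h2
      show 1 / C ≤ (1/2) * ∑ σ : (Fin n → Fin b) → Bool,
        |levelDist (bsc ε) b true n σ - levelDist (bsc ε) b false n σ|
      calc 1 / C = (1/2) * (2 / C) := by ring
        _ ≤ _ := mul_le_mul_of_nonneg_left h2 (by norm_num)
    have hbdd : BddBelow (Set.range
        (fun n => tvDist (levelDist (bsc ε) b true n) (levelDist (bsc ε) b false n))) :=
      ⟨1/C, by rintro x ⟨n, rfl⟩; exact hlb n⟩
    exact ⟨true, false,
      ⨅ n, tvDist (levelDist (bsc ε) b true n) (levelDist (bsc ε) b false n),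
      lt_of_lt_of_le (div_pos one_pos hC) (le_ciInf hlb),
      tendsto_atTop_ciInf hanti hbdd⟩
  · have hanti : Antitone (fun n => censusTV (bsc ε) b true false n) :=
      censusTV_antitone hε0.le hε1.le b true false
    have hlb : ∀ n, 1 / C ≤ censusTV (bsc ε) b true false n := by
      intro n
      have h2 := censusTV_lower hε0 hε1 h n
      rw [← hCdef] at h2
      rw [censusTV_eq]
      calc 1 / C = (1/2) * (2 / C) := by ring
        _ ≤ _ := mul_le_mul_of_nonneg_left h2 (by norm_num)
    have hbdd : BddBelow (Set.range (fun n => censusTV (bsc ε) b true false n)) :=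
      ⟨1/C, by rintro x ⟨n, rfl⟩; exact hlb n⟩
    exact ⟨true, false, ⨅ n, censusTV (bsc ε) b true false n,
      lt_of_lt_of_le (div_pos one_pos hC) (le_ciInf hlb),
      tendsto_atTop_ciInf hanti hbdd⟩
end

section
/- Let M be a stochastic matrix on a finite alphabet A defining an ergodic (irreducible and aperiodic) Markov chain, let λ₂(M) be an eigenvalue of M of second largest absolute value, and let b ≥ 2 be an integer with b·|λ₂(M)|² > 1. Then the reconstruction problem for the b-ary tree T_b and M is census solvable (and in particular solvable). -/
open Filter

/-- The `m`-step transition probabilities of the channel `M`. -/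
noncomputable def stepPow {A : Type} [Fintype A] [DecidableEq A]
    (M : A → A → ℝ) : ℕ → A → A → ℝ
  | 0 => fun i j => if i = j then 1 else 0
  | m + 1 => fun i j => ∑ k, stepPow M m i k * M k j

/-- `M` defines an ergodic (irreducible and aperiodic) markov chain: some power
of the transition matrix has all entries positive. -/
def IsErgodic {A : Type} [Fintype A] [DecidableEq A] (M : A → A → ℝ) : Prop :=
  ∃ m : ℕ, ∀ i j : A, 0 < stepPow M m i j

/-- `lam` is a (possibly complex) eigenvalue of the transition matrix of `M`. -/
def IsEigenvalue {A : Type} [Fintype A] (M : A → A → ℝ) (lam : ℂ) : Prop :=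
  ∃ v : A → ℂ, v ≠ 0 ∧ ∀ i, ∑ j, (M i j : ℂ) * v j = lam * v i

namespace KS

variable {A : Type} [Fintype A] [DecidableEq A]

/-- abbreviation for configurations -/
abbrev Cfg (A : Type) (b n : ℕ) := (Fin n → Fin b) → A

lemma sum_pi_prod {β : Type*} [CommSemiring β] {ι : Type*} [Fintype ι] [DecidableEq ι]
    (F : ι → A → β) : ∑ τ : ι → A, ∏ w, F w (τ w) = ∏ w, ∑ a, F w a :=
  (Fintype.prod_sum F).symm

/-- the one-level transition kernel -/
noncomputable def ker (M : A → A → ℝ) (b n : ℕ) (σ : Cfg A b n) (τ : Cfg A b (n+1)) : ℝ :=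
  ∏ w : Fin (n + 1) → Fin b, M (σ fun m => w m.castSucc) (τ w)

lemma levelDist_succ (M : A → A → ℝ) (b : ℕ) (i : A) (n : ℕ) (τ : Cfg A b (n+1)) :
    levelDist M b i (n+1) τ = ∑ σ : Cfg A b n, levelDist M b i n σ * ker M b n σ τ := rfl

lemma ker_nonneg {M : A → A → ℝ} (hnn : ∀ i j, 0 ≤ M i j) {b n : ℕ}
    (σ : Cfg A b n) (τ : Cfg A b (n+1)) : 0 ≤ ker M b n σ τ :=
  Finset.prod_nonneg fun w _ => hnn _ _

lemma sum_ker {M : A → A → ℝ} (hrow : ∀ i, ∑ j, M i j = 1) {b n : ℕ} (σ : Cfg A b n) :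
    ∑ τ : Cfg A b (n+1), ker M b n σ τ = 1 := by
  rw [show (fun τ => ker M b n σ τ) = fun τ : Cfg A b (n+1) =>
    ∏ w, (fun w a => M (σ fun m => w m.castSucc) a) w (τ w) from rfl]
  rw [sum_pi_prod]
  simp [hrow]

lemma levelDist_nonneg {M : A → A → ℝ} (hnn : ∀ i j, 0 ≤ M i j) (b : ℕ) (i : A) :
    ∀ n (σ : Cfg A b n), 0 ≤ levelDist M b i n σ
  | 0, σ => by simp only [levelDist]; positivity
  | n+1, τ => by
      rw [levelDist_succ]
      exact Finset.sum_nonneg fun σ _ =>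
        mul_nonneg (levelDist_nonneg hnn b i n σ) (ker_nonneg hnn σ τ)

lemma sum_levelDist {M : A → A → ℝ} (hrow : ∀ i, ∑ j, M i j = 1) (b : ℕ) (i : A) :
    ∀ n, ∑ σ : Cfg A b n, levelDist M b i n σ = 1
  | 0 => by simp [levelDist]
  | n+1 => by
      simp only [levelDist_succ]
      rw [Finset.sum_comm]
      simp only [← Finset.mul_sum, sum_ker hrow]
      simpa using sum_levelDist hrow b i n

end KS
namespace KS
set_option linter.unusedSectionVars false
set_option linter.unusedVariables false
set_option maxHeartbeats 1000000

variable {A : Type} [Fintype A] [DecidableEq A]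

lemma sum_pi_prod_single {ι : Type*} [Fintype ι] [DecidableEq ι]
    (f : ι → A → ℂ) (hf : ∀ w, ∑ a, f w a = 1) (w0 : ι) (g : A → ℂ) :
    ∑ τ : ι → A, (∏ w, f w (τ w)) * g (τ w0) = ∑ a, f w0 a * g a := by
  have key : ∀ τ : ι → A, (∏ w, f w (τ w)) * g (τ w0)
      = ∏ w, (fun w a => f w a * (if w = w0 then g a else 1)) w (τ w) := by
    intro τ
    simp only [Finset.prod_mul_distrib]
    congr 1
    simp [Finset.prod_ite_eq']
  rw [Finset.sum_congr rfl fun τ _ => key τ,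
    sum_pi_prod (fun w a => f w a * (if w = w0 then g a else 1))]
  have := Finset.prod_eq_single (f := fun w => ∑ a, f w a * (if w = w0 then g a else 1))
    (s := Finset.univ) w0
    (fun w _ hw => by simp [hw, hf w]) (fun hw => absurd (Finset.mem_univ w0) hw)
  rw [this]
  simp

lemma sum_pi_prod_double {ι : Type*} [Fintype ι] [DecidableEq ι]
    (f : ι → A → ℂ) (hf : ∀ w, ∑ a, f w a = 1) (w0 w1 : ι) (hne : w0 ≠ w1) (g h : A → ℂ) :
    ∑ τ : ι → A, (∏ w, f w (τ w)) * (g (τ w0) * h (τ w1))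
      = (∑ a, f w0 a * g a) * (∑ a, f w1 a * h a) := by
  have key : ∀ τ : ι → A, (∏ w, f w (τ w)) * (g (τ w0) * h (τ w1))
      = ∏ w, (fun w a => f w a * ((if w = w0 then g a else 1) * (if w = w1 then h a else 1)))
          w (τ w) := by
    intro τ
    simp only [Finset.prod_mul_distrib]
    have h0 : (∏ w, if w = w0 then g (τ w) else 1) = g (τ w0) := by
      simp [Finset.prod_ite_eq']
    have h1 : (∏ w, if w = w1 then h (τ w) else 1) = h (τ w1) := by
      simp [Finset.prod_ite_eq']
    rw [h0, h1]; try ring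
  rw [Finset.sum_congr rfl fun τ _ => key τ,
    sum_pi_prod (fun w a => f w a * ((if w = w0 then g a else 1) * (if w = w1 then h a else 1)))]
  have hmem0 : w0 ∈ Finset.univ := Finset.mem_univ (α := ι) w0
  rw [← Finset.mul_prod_erase Finset.univ _ hmem0]
  have hmem1 : w1 ∈ Finset.univ.erase w0 := Finset.mem_erase.2 ⟨hne.symm, Finset.mem_univ _⟩
  rw [← Finset.mul_prod_erase _ _ hmem1]
  have hrest : ∏ w ∈ (Finset.univ.erase w0).erase w1,
      (∑ a, f w a * ((if w = w0 then g a else 1) * (if w = w1 then h a else 1))) = 1 := by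
    apply Finset.prod_eq_one
    intro w hw
    have hw1 : w ≠ w1 := (Finset.mem_erase.1 hw).1
    have hw0 : w ≠ w0 := (Finset.mem_erase.1 (Finset.mem_erase.1 hw).2).1
    simp [hw0, hw1, hf w]
  rw [hrest, mul_one]
  have e0 : (∑ a, f w0 a * ((if w0 = w0 then g a else 1) * (if w0 = w1 then h a else 1)))
      = ∑ a, f w0 a * g a := by simp [hne]
  have e1 : (∑ a, f w1 a * ((if w1 = w0 then g a else 1) * (if w1 = w1 then h a else 1)))
      = ∑ a, f w1 a * h a := by simp [hne.symm]
  rw [e0, e1]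

/-- paths of length `n+1` are paths of length `n` plus a last step -/
def pathEquiv (b n : ℕ) : ((Fin n → Fin b) × Fin b) ≃ (Fin (n+1) → Fin b) where
  toFun x := Fin.snoc x.1 x.2
  invFun w := (fun m => w m.castSucc, w (Fin.last n))
  left_inv x := by
    refine Prod.ext ?_ ?_ <;> simp [Fin.snoc_castSucc, Fin.snoc_last]
  right_inv w := Fin.snoc_init_self w

@[simp] lemma pathEquiv_parent (b n : ℕ) (p : Fin n → Fin b) (k : Fin b) :
    (fun m => (pathEquiv b n (p, k)) m.castSucc) = p := by
  funext m
  show (Fin.snoc (α := fun _ => Fin b) p k m.castSucc : Fin b) = p m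
  simp [Fin.snoc_castSucc]

lemma sum_parent {β : Type*} [AddCommMonoid β] (b n : ℕ) (F : (Fin n → Fin b) → β) :
    ∑ w : Fin (n+1) → Fin b, F (fun m => w m.castSucc)
      = ∑ p : Fin n → Fin b, ∑ k : Fin b, F p := by
  rw [← Equiv.sum_comp (pathEquiv b n) (fun w => F (fun m => w m.castSucc))]
  rw [Fintype.sum_prod_type]
  simp

end KS
namespace KS
set_option linter.unusedSectionVars false
set_option linter.unusedVariables false
set_option maxHeartbeats 1000000

open Complex

variable {A : Type} [Fintype A] [DecidableEq A]

/-- the linear statistic -/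
noncomputable def Sfun (v : A → ℂ) (b n : ℕ) (σ : Cfg A b n) : ℂ := ∑ w, v (σ w)

noncomputable def meanS (M : A → A → ℝ) (v : A → ℂ) (b : ℕ) (i : A) (n : ℕ) : ℂ :=
  ∑ σ : Cfg A b n, ((levelDist M b i n σ : ℝ) : ℂ) * Sfun v b n σ

noncomputable def m2S (M : A → A → ℝ) (v : A → ℂ) (b : ℕ) (i : A) (n : ℕ) : ℝ :=
  ∑ σ : Cfg A b n, levelDist M b i n σ * Complex.normSq (Sfun v b n σ)

lemma kerC (M : A → A → ℝ) {b n : ℕ} (σ : Cfg A b n) (τ : Cfg A b (n+1)) :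
    ((ker M b n σ τ : ℝ) : ℂ)
      = ∏ w, (fun (w : Fin (n+1) → Fin b) (a : A) =>
          ((M (σ fun m => w m.castSucc) a : ℝ) : ℂ)) w (τ w) := by
  simp [ker, Complex.ofReal_prod]

section eig
variable {M : A → A → ℝ} {v : A → ℂ} {lam2 : ℂ} {b : ℕ}

lemma frow (hrow : ∀ i, ∑ j, M i j = 1) {n : ℕ} (σ : Cfg A b n) :
    ∀ w : Fin (n+1) → Fin b, ∑ a, ((M (σ fun m => w m.castSucc) a : ℝ) : ℂ) = 1 := by
  intro w
  rw [← Complex.ofReal_sum]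
  rw [hrow]
  simp

lemma sum_parent_v {n : ℕ} (σ : Cfg A b n) (u : A → ℂ) :
    ∑ w : Fin (n+1) → Fin b, u (σ fun m => w m.castSucc)
      = (b : ℂ) * ∑ p, u (σ p) := by
  rw [sum_parent b n (fun p => u (σ p))]
  simp [Finset.sum_const, Finset.mul_sum]

lemma inner_mean (hrow : ∀ i, ∑ j, M i j = 1)
    (heig : ∀ p, ∑ a, ((M p a : ℝ) : ℂ) * v a = lam2 * v p) {n : ℕ} (σ : Cfg A b n) :
    ∑ τ : Cfg A b (n+1), ((ker M b n σ τ : ℝ) : ℂ) * Sfun v b (n+1) τ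
      = (b : ℂ) * lam2 * Sfun v b n σ := by
  simp only [Sfun, Finset.mul_sum]
  rw [Finset.sum_comm]
  have step : ∀ w0 : Fin (n+1) → Fin b,
      ∑ τ : Cfg A b (n+1), ((ker M b n σ τ : ℝ) : ℂ) * v (τ w0)
        = lam2 * v (σ fun m => w0 m.castSucc) := by
    intro w0
    calc ∑ τ : Cfg A b (n+1), ((ker M b n σ τ : ℝ) : ℂ) * v (τ w0)
        = ∑ τ : Cfg A b (n+1), (∏ w, ((M (σ fun m => w m.castSucc) (τ w) : ℝ) : ℂ)) * v (τ w0) := by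
          refine Finset.sum_congr rfl fun τ _ => ?_
          rw [kerC]
      _ = ∑ a, ((M (σ fun m => w0 m.castSucc) a : ℝ) : ℂ) * v a :=
          sum_pi_prod_single _ (frow hrow σ) w0 v
      _ = lam2 * v (σ fun m => w0 m.castSucc) := heig _
  rw [Finset.sum_congr rfl fun w0 _ => step w0, ← Finset.mul_sum,
    sum_parent_v σ (fun p => v p)]
  rw [Finset.mul_sum, Finset.mul_sum]
  exact Finset.sum_congr rfl fun p _ => by ring

lemma meanS_zero (M : A → A → ℝ) (v : A → ℂ) (b : ℕ) (i : A) :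
    meanS M v b i 0 = v i := by
  simp only [meanS, levelDist]
  rw [Fintype.sum_eq_single (fun _ => i) (by
    intro σ hσ
    simp [hσ])]
  simp [Sfun]

lemma meanS_formula (hrow : ∀ i, ∑ j, M i j = 1)
    (heig : ∀ p, ∑ a, ((M p a : ℝ) : ℂ) * v a = lam2 * v p) (i : A) : ∀ n, meanS M v b i n = ((b : ℂ) * lam2)^n * v i
  | 0 => by simpa using meanS_zero M v b i
  | n+1 => by
      have e1 : meanS M v b i (n+1) = ∑ σ : Cfg A b n, ((levelDist M b i n σ : ℝ):ℂ) *
          ∑ τ : Cfg A b (n+1), ((ker M b n σ τ : ℝ):ℂ) * Sfun v b (n+1) τ := by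
        simp only [meanS, levelDist_succ, Complex.ofReal_sum, Complex.ofReal_mul,
          Finset.sum_mul, Finset.mul_sum]
        rw [Finset.sum_comm]
        exact Finset.sum_congr rfl fun σ _ => Finset.sum_congr rfl fun τ _ => by ring
      have e2 : meanS M v b i (n+1) = (b : ℂ) * lam2 * meanS M v b i n := by
        rw [e1]
        simp only [inner_mean hrow heig]
        rw [meanS, Finset.mul_sum]
        exact Finset.sum_congr rfl fun σ _ => by ring
      rw [e2, meanS_formula hrow heig i n]
      ring

end eig

end KS
namespace KS
set_option linter.unusedSectionVars false
set_option linter.unusedVariables false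
set_option maxHeartbeats 2000000

open Complex

variable {A : Type} [Fintype A] [DecidableEq A]

/-- per-vertex variance term -/
noncomputable def rR (M : A → A → ℝ) (v : A → ℂ) (lam2 : ℂ) {b n : ℕ} (σ : Cfg A b n) : ℝ :=
  ∑ w : Fin (n+1) → Fin b,
    ((∑ a, M (σ fun m => w m.castSucc) a * Complex.normSq (v a))
      - Complex.normSq lam2 * Complex.normSq (v (σ fun m => w m.castSucc)))

section eig
variable {M : A → A → ℝ} {v : A → ℂ} {lam2 : ℂ} {b : ℕ}

lemma inner_sq (hrow : ∀ i, ∑ j, M i j = 1)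
    (heig : ∀ p, ∑ a, ((M p a : ℝ) : ℂ) * v a = lam2 * v p) {n : ℕ} (σ : Cfg A b n) :
    ∑ τ : Cfg A b (n+1), ((ker M b n σ τ : ℝ) : ℂ) *
        (Sfun v b (n+1) τ * (starRingEnd ℂ) (Sfun v b (n+1) τ))
      = (((b:ℝ)^2 * Complex.normSq lam2 * Complex.normSq (Sfun v b n σ)
          + rR M v lam2 σ : ℝ) : ℂ) := by
  classical
  set U : (Fin (n+1) → Fin b) → ℂ := fun w => lam2 * v (σ fun m => w m.castSucc) with hU
  set D : (Fin (n+1) → Fin b) → ℂ := fun w =>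
    (∑ a, ((M (σ fun m => w m.castSucc) a : ℝ) : ℂ) * (v a * (starRingEnd ℂ) (v a)))
      - U w * (starRingEnd ℂ) (U w) with hD
  have expand : ∑ τ : Cfg A b (n+1), ((ker M b n σ τ : ℝ) : ℂ) *
        (Sfun v b (n+1) τ * (starRingEnd ℂ) (Sfun v b (n+1) τ))
      = ∑ w0 : Fin (n+1) → Fin b, ∑ w1 : Fin (n+1) → Fin b,
          ∑ τ : Cfg A b (n+1), ((ker M b n σ τ : ℝ) : ℂ) *
            (v (τ w0) * (starRingEnd ℂ) (v (τ w1))) := by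
    have e : ∀ τ : Cfg A b (n+1), Sfun v b (n+1) τ * (starRingEnd ℂ) (Sfun v b (n+1) τ)
        = ∑ w0, ∑ w1, v (τ w0) * (starRingEnd ℂ) (v (τ w1)) := by
      intro τ
      rw [Sfun, map_sum, Finset.sum_mul_sum]
    simp only [e, Finset.mul_sum]
    rw [Finset.sum_comm]
    exact Finset.sum_congr rfl fun w0 _ => Finset.sum_comm
  have Tval : ∀ w0 w1 : Fin (n+1) → Fin b,
      ∑ τ : Cfg A b (n+1), ((ker M b n σ τ : ℝ) : ℂ) *
          (v (τ w0) * (starRingEnd ℂ) (v (τ w1)))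
        = U w0 * (starRingEnd ℂ) (U w1) + (if w0 = w1 then D w0 else 0) := by
    intro w0 w1
    have hker : ∀ τ : Cfg A b (n+1), ((ker M b n σ τ : ℝ) : ℂ)
        = ∏ w, (fun (w : Fin (n+1) → Fin b) (a : A) =>
            ((M (σ fun m => w m.castSucc) a : ℝ) : ℂ)) w (τ w) := fun τ => kerC M σ τ
    by_cases hw : w0 = w1
    · subst hw
      have : ∑ τ : Cfg A b (n+1), ((ker M b n σ τ : ℝ) : ℂ) *
            (v (τ w0) * (starRingEnd ℂ) (v (τ w0)))
          = ∑ a, ((M (σ fun m => w0 m.castSucc) a : ℝ) : ℂ) * (v a * (starRingEnd ℂ) (v a)) := by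
        rw [Finset.sum_congr rfl fun τ _ => by rw [hker τ]]
        exact sum_pi_prod_single _ (frow hrow σ) w0 (fun a => v a * (starRingEnd ℂ) (v a))
      rw [this, if_pos rfl]
      simp only [hD]
      abel
    · have : ∑ τ : Cfg A b (n+1), ((ker M b n σ τ : ℝ) : ℂ) *
            (v (τ w0) * (starRingEnd ℂ) (v (τ w1)))
          = (∑ a, ((M (σ fun m => w0 m.castSucc) a : ℝ) : ℂ) * v a) *
            (∑ a, ((M (σ fun m => w1 m.castSucc) a : ℝ) : ℂ) * (starRingEnd ℂ) (v a)) := by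
        rw [Finset.sum_congr rfl fun τ _ => by rw [hker τ]]
        exact sum_pi_prod_double _ (frow hrow σ) w0 w1 hw v (fun a => (starRingEnd ℂ) (v a))
      rw [this, if_neg hw, add_zero, heig]
      congr 1
      calc ∑ a, ((M (σ fun m => w1 m.castSucc) a : ℝ) : ℂ) * (starRingEnd ℂ) (v a)
          = ∑ a, (starRingEnd ℂ) (((M (σ fun m => w1 m.castSucc) a : ℝ) : ℂ) * v a) := by
            refine Finset.sum_congr rfl fun a _ => ?_
            rw [map_mul, Complex.conj_ofReal]
        _ = (starRingEnd ℂ) (U w1) := by rw [← map_sum, heig]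
  rw [expand, Finset.sum_congr rfl fun w0 _ => Finset.sum_congr rfl fun w1 _ => Tval w0 w1]
  simp only [Finset.sum_add_distrib]
  have hsum1 : ∑ w0 : Fin (n+1) → Fin b, ∑ w1 : Fin (n+1) → Fin b,
      U w0 * (starRingEnd ℂ) (U w1)
      = (∑ w, U w) * (starRingEnd ℂ) (∑ w, U w) := by
    rw [map_sum, Finset.sum_mul_sum]
  have hsum2 : ∑ w0 : Fin (n+1) → Fin b, (∑ w1 : Fin (n+1) → Fin b,
      if w0 = w1 then D w0 else 0) = ∑ w, D w := by
    refine Finset.sum_congr rfl fun w0 _ => ?_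
    simp
  rw [hsum1, hsum2]
  have hSU : ∑ w, U w = lam2 * ((b:ℂ) * Sfun v b n σ) := by
    rw [hU, ← Finset.mul_sum, sum_parent_v σ (fun p => v p), Sfun]
  have hUU : (∑ w, U w) * (starRingEnd ℂ) (∑ w, U w)
      = (((b:ℝ)^2 * Complex.normSq lam2 * Complex.normSq (Sfun v b n σ) : ℝ) : ℂ) := by
    rw [hSU, Complex.mul_conj]
    norm_cast
    simp only [Complex.normSq_mul]
    have : Complex.normSq ((b:ℕ):ℂ) = (b:ℝ)^2 := by
      simp [Complex.normSq_apply]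
      ring
    rw [this]
    push_cast
    ring
  have hDD : ∑ w, D w = ((rR M v lam2 σ : ℝ) : ℂ) := by
    rw [rR, Complex.ofReal_sum]
    refine Finset.sum_congr rfl fun w _ => ?_
    simp only [hD]
    have h1 : ∑ a, ((M (σ fun m => w m.castSucc) a : ℝ):ℂ) * (v a * (starRingEnd ℂ) (v a))
        = ((∑ a, M (σ fun m => w m.castSucc) a * Complex.normSq (v a) : ℝ) : ℂ) := by
      push_cast
      exact Finset.sum_congr rfl fun a _ => by rw [Complex.mul_conj]
    have h2 : U w * (starRingEnd ℂ) (U w)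
        = ((Complex.normSq lam2 * Complex.normSq (v (σ fun m => w m.castSucc)) : ℝ) : ℂ) := by
      rw [Complex.mul_conj]
      norm_cast
      simp only [hU]
      exact Complex.normSq_mul _ _
    rw [h1, h2]
    push_cast
    ring
  rw [hUU, hDD]
  push_cast
  ring

lemma m2S_zero (M : A → A → ℝ) (v : A → ℂ) (b : ℕ) (i : A) :
    m2S M v b i 0 = Complex.normSq (v i) := by
  simp only [m2S, levelDist]
  rw [Fintype.sum_eq_single (fun _ => i) (by intro σ hσ; simp [hσ])]
  simp [Sfun]

lemma m2S_succ (hrow : ∀ i, ∑ j, M i j = 1)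
    (heig : ∀ p, ∑ a, ((M p a : ℝ) : ℂ) * v a = lam2 * v p) (i : A) (n : ℕ) :
    m2S M v b i (n+1) = ∑ σ : Cfg A b n, levelDist M b i n σ *
        ((b:ℝ)^2 * Complex.normSq lam2 * Complex.normSq (Sfun v b n σ) + rR M v lam2 σ) := by
  apply Complex.ofReal_injective
  calc ((m2S M v b i (n+1) : ℝ) : ℂ)
      = ∑ τ : Cfg A b (n+1), ((levelDist M b i (n+1) τ : ℝ) : ℂ) *
          (Sfun v b (n+1) τ * (starRingEnd ℂ) (Sfun v b (n+1) τ)) := by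
        rw [m2S, Complex.ofReal_sum]
        refine Finset.sum_congr rfl fun τ _ => ?_
        rw [Complex.mul_conj]
        push_cast
        ring
    _ = ∑ σ : Cfg A b n, ((levelDist M b i n σ : ℝ) : ℂ) *
          ∑ τ : Cfg A b (n+1), ((ker M b n σ τ : ℝ) : ℂ) *
            (Sfun v b (n+1) τ * (starRingEnd ℂ) (Sfun v b (n+1) τ)) := by
        simp only [levelDist_succ, Complex.ofReal_sum, Complex.ofReal_mul,
          Finset.sum_mul, Finset.mul_sum]
        rw [Finset.sum_comm]
        exact Finset.sum_congr rfl fun σ _ => Finset.sum_congr rfl fun τ _ => by ring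
    _ = ((∑ σ : Cfg A b n, levelDist M b i n σ *
          ((b:ℝ)^2 * Complex.normSq lam2 * Complex.normSq (Sfun v b n σ)
            + rR M v lam2 σ) : ℝ) : ℂ) := by
        rw [Finset.sum_congr rfl fun σ _ => by rw [inner_sq hrow heig σ]]
        push_cast
        exact Finset.sum_congr rfl fun σ _ => by ring

end eig

end KS
namespace KS
set_option linter.unusedSectionVars false
set_option linter.unusedVariables false
set_option maxHeartbeats 2000000

open Complex

variable {A : Type} [Fintype A] [DecidableEq A]

section bounds
variable {M : A → A → ℝ} {v : A → ℂ} {lam2 : ℂ} {b : ℕ}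

lemma normSq_le_C0 (v : A → ℂ) (a : A) :
    Complex.normSq (v a) ≤ ∑ a', Complex.normSq (v a') :=
  Finset.single_le_sum (fun a' _ => Complex.normSq_nonneg (v a')) (Finset.mem_univ a)

lemma rR_le (hnn : ∀ i j, 0 ≤ M i j) (hrow : ∀ i, ∑ j, M i j = 1) {n : ℕ} (σ : Cfg A b n) :
    rR M v lam2 σ ≤ (b:ℝ)^(n+1) * ∑ a, Complex.normSq (v a) := by
  set C0 := ∑ a, Complex.normSq (v a) with hC0
  have hterm : ∀ w : Fin (n+1) → Fin b,
      (∑ a, M (σ fun m => w m.castSucc) a * Complex.normSq (v a))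
        - Complex.normSq lam2 * Complex.normSq (v (σ fun m => w m.castSucc)) ≤ C0 := by
    intro w
    have h1 : (∑ a, M (σ fun m => w m.castSucc) a * Complex.normSq (v a)) ≤ C0 := by
      calc (∑ a, M (σ fun m => w m.castSucc) a * Complex.normSq (v a))
          ≤ ∑ a, M (σ fun m => w m.castSucc) a * C0 :=
            Finset.sum_le_sum fun a _ =>
              mul_le_mul_of_nonneg_left (normSq_le_C0 v a) (hnn _ a)
        _ = C0 := by rw [← Finset.sum_mul, hrow]; ring
    have h2 : 0 ≤ Complex.normSq lam2 * Complex.normSq (v (σ fun m => w m.castSucc)) :=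
      mul_nonneg (Complex.normSq_nonneg _) (Complex.normSq_nonneg _)
    linarith
  calc rR M v lam2 σ ≤ ∑ _w : Fin (n+1) → Fin b, C0 := Finset.sum_le_sum fun w _ => hterm w
    _ = (b:ℝ)^(n+1) * C0 := by
        rw [Finset.sum_const, Finset.card_univ, Fintype.card_fun]
        simp [nsmul_eq_mul]
        try (push_cast; ring)

lemma m2S_nonneg (hnn : ∀ i j, 0 ≤ M i j) (i : A) (n : ℕ) : 0 ≤ m2S M v b i n :=
  Finset.sum_nonneg fun σ _ =>
    mul_nonneg (levelDist_nonneg hnn b i n σ) (Complex.normSq_nonneg _)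

lemma m2S_succ_le (hnn : ∀ i j, 0 ≤ M i j) (hrow : ∀ i, ∑ j, M i j = 1)
    (heig : ∀ p, ∑ a, ((M p a : ℝ) : ℂ) * v a = lam2 * v p) (i : A) (n : ℕ) :
    m2S M v b i (n+1) ≤ (b:ℝ)^2 * Complex.normSq lam2 * m2S M v b i n
      + (b:ℝ)^(n+1) * ∑ a, Complex.normSq (v a) := by
  rw [m2S_succ hrow heig]
  have expand : ∑ σ : Cfg A b n, levelDist M b i n σ *
      ((b:ℝ)^2 * Complex.normSq lam2 * Complex.normSq (Sfun v b n σ) + rR M v lam2 σ)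
      = (b:ℝ)^2 * Complex.normSq lam2 * m2S M v b i n
        + ∑ σ : Cfg A b n, levelDist M b i n σ * rR M v lam2 σ := by
    rw [m2S, Finset.mul_sum, ← Finset.sum_add_distrib]
    exact Finset.sum_congr rfl fun σ _ => by ring
  rw [expand]
  have hrr : ∑ σ : Cfg A b n, levelDist M b i n σ * rR M v lam2 σ
      ≤ (b:ℝ)^(n+1) * ∑ a, Complex.normSq (v a) := by
    calc ∑ σ : Cfg A b n, levelDist M b i n σ * rR M v lam2 σ
        ≤ ∑ σ : Cfg A b n, levelDist M b i n σ * ((b:ℝ)^(n+1) * ∑ a, Complex.normSq (v a)) :=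
          Finset.sum_le_sum fun σ _ =>
            mul_le_mul_of_nonneg_left (rR_le hnn hrow σ) (levelDist_nonneg hnn b i n σ)
      _ = (b:ℝ)^(n+1) * ∑ a, Complex.normSq (v a) := by
          rw [← Finset.sum_mul, sum_levelDist hrow, one_mul]
  linarith

lemma m2S_le (hnn : ∀ i j, 0 ≤ M i j) (hrow : ∀ i, ∑ j, M i j = 1)
    (heig : ∀ p, ∑ a, ((M p a : ℝ) : ℂ) * v a = lam2 * v p)
    (hlam : 1 < (b:ℝ) * Complex.normSq lam2) (i : A) :
    ∀ n, m2S M v b i n ≤ (∑ a, Complex.normSq (v a)) * ((b:ℝ)^2 * Complex.normSq lam2)^n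
      * ∑ k ∈ Finset.range (n+1), (((b:ℝ) * Complex.normSq lam2)⁻¹)^k
  | 0 => by
      rw [m2S_zero]
      simp only [pow_zero, mul_one, Finset.range_one, Finset.sum_singleton]
      simpa using normSq_le_C0 v i
  | n+1 => by
      set C0 := ∑ a, Complex.normSq (v a) with hC0
      set B := (b:ℝ)^2 * Complex.normSq lam2 with hB
      set rr := ((b:ℝ) * Complex.normSq lam2)⁻¹ with hrr
      have hbpos : (0:ℝ) < b := by nlinarith [Complex.normSq_nonneg lam2]
      have hbn : (0:ℝ) < (b:ℝ) * Complex.normSq lam2 := by linarith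
      have hBpos : 0 < B := by rw [hB]; nlinarith
      have hBrr : B * rr = b := by
        rw [hB, hrr]
        field_simp
        exact mul_inv_cancel₀ (pos_of_mul_pos_right hbn hbpos.le).ne'
      have ih := m2S_le hnn hrow heig hlam i n
      calc m2S M v b i (n+1)
          ≤ B * m2S M v b i n + (b:ℝ)^(n+1) * C0 := by
            rw [hB, hC0]; exact m2S_succ_le hnn hrow heig i n
        _ ≤ B * (C0 * B^n * ∑ k ∈ Finset.range (n+1), rr^k) + (b:ℝ)^(n+1) * C0 := by
            have := mul_le_mul_of_nonneg_left ih (le_of_lt hBpos)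
            linarith
        _ = C0 * B^(n+1) * ∑ k ∈ Finset.range (n+2), rr^k := by
            rw [Finset.sum_range_succ (fun k => rr^k) (n+1)]
            have hbe : (b:ℝ)^(n+1) = B^(n+1) * rr^(n+1) := by
              rw [← mul_pow, hBrr]
            rw [hbe]
            ring

lemma geom_le {x : ℝ} (h0 : 0 ≤ x) (h1 : x < 1) (m : ℕ) :
    ∑ k ∈ Finset.range m, x^k ≤ (1 - x)⁻¹ := by
  have hne : x ≠ 1 := ne_of_lt h1
  have h2 : (0:ℝ) < 1 - x := by linarith
  rw [geom_sum_eq hne]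
  have h3 : (1 - x^m) ≤ 1 := by nlinarith [pow_nonneg h0 m]
  calc (x^m - 1)/(x-1) = (1 - x^m)/(1-x) := by rw [← neg_div_neg_eq]; ring_nf
    _ ≤ 1/(1-x) := (div_le_div_iff_of_pos_right h2).mpr h3
    _ = (1-x)⁻¹ := one_div _

end bounds

end KS
namespace KS
set_option linter.unusedSectionVars false
set_option linter.unusedVariables false
set_option maxHeartbeats 2000000

open Complex

variable {A : Type} [Fintype A] [DecidableEq A]

/-- The finite set of possible censuses at level `n`. -/
noncomputable def csupp (A : Type) [Fintype A] [DecidableEq A] (b n : ℕ) : Finset (A → ℕ) :=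
  Finset.univ.image (census (A := A) (b := b) (n := n))

lemma census_mem_csupp {b n : ℕ} (σ : Cfg A b n) : census σ ∈ csupp A b n :=
  Finset.mem_image_of_mem _ (Finset.mem_univ σ)

lemma censusDist_eq_zero (M : A → A → ℝ) (b : ℕ) (i : A) (n : ℕ) {c : A → ℕ}
    (hc : c ∉ csupp A b n) : censusDist M b i n c = 0 := by
  rw [censusDist]
  refine Finset.sum_eq_zero fun σ _ => ?_
  rw [if_neg]
  intro hcc
  exact hc (hcc ▸ census_mem_csupp σ)

lemma censusTV_eq (M : A → A → ℝ) (b : ℕ) (i j : A) (n : ℕ) :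
    censusTV M b i j n = (1/2) * ∑ c ∈ csupp A b n,
      |censusDist M b i n c - censusDist M b j n c| := by
  rw [censusTV]
  congr 1
  apply tsum_eq_sum
  intro c hc
  rw [censusDist_eq_zero M b i n hc, censusDist_eq_zero M b j n hc]
  simp

lemma regroupR {b n : ℕ} (u : Cfg A b n → ℝ) (h : (A → ℕ) → ℝ) :
    ∑ c ∈ csupp A b n, (∑ σ : Cfg A b n, if census σ = c then u σ else 0) * h c
      = ∑ σ : Cfg A b n, u σ * h (census σ) := by
  simp only [Finset.sum_mul, ite_mul, zero_mul]
  rw [Finset.sum_comm]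
  refine Finset.sum_congr rfl fun σ _ => ?_
  rw [Finset.sum_ite_eq (csupp A b n) (census σ) (fun c => u σ * h c),
    if_pos (census_mem_csupp σ)]

lemma regroupC {b n : ℕ} (u : Cfg A b n → ℝ) (h : (A → ℕ) → ℂ) :
    ∑ c ∈ csupp A b n, ((∑ σ : Cfg A b n, if census σ = c then u σ else 0 : ℝ) : ℂ) * h c
      = ∑ σ : Cfg A b n, (u σ : ℂ) * h (census σ) := by
  have : ∀ c, ((∑ σ : Cfg A b n, if census σ = c then u σ else 0 : ℝ) : ℂ)
      = ∑ σ : Cfg A b n, if census σ = c then ((u σ : ℝ) : ℂ) else 0 := by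
    intro c
    push_cast
    exact Finset.sum_congr rfl fun σ _ => by split_ifs <;> simp
  simp only [this, Finset.sum_mul, ite_mul, zero_mul]
  rw [Finset.sum_comm]
  refine Finset.sum_congr rfl fun σ _ => ?_
  rw [Finset.sum_ite_eq (csupp A b n) (census σ) (fun c => ((u σ : ℝ):ℂ) * h c),
    if_pos (census_mem_csupp σ)]

/-- the statistic as a function of the census -/
noncomputable def Sc (v : A → ℂ) (c : A → ℕ) : ℂ := ∑ a, (c a : ℂ) * v a

lemma Sfun_eq_Sc (v : A → ℂ) {b n : ℕ} (σ : Cfg A b n) :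
    Sfun v b n σ = Sc v (census σ) := by
  rw [Sfun, Sc]
  rw [← Finset.sum_fiberwise Finset.univ σ (fun w => v (σ w))]
  refine Finset.sum_congr rfl fun a _ => ?_
  have : ∀ w ∈ Finset.univ.filter (fun w => σ w = a), v (σ w) = v a := by
    intro w hw
    rw [(Finset.mem_filter.1 hw).2]
  rw [Finset.sum_congr rfl this, Finset.sum_const, census]
  rw [nsmul_eq_mul]

lemma cs_bound {γ : Type*} (s : Finset γ) (d q : γ → ℝ)
    (hq : ∀ c ∈ s, |d c| ≤ q c) (T : γ → ℂ) :
    ‖∑ c ∈ s, (d c : ℂ) * T c‖ ^ 2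
      ≤ (∑ c ∈ s, |d c|) * ∑ c ∈ s, q c * Complex.normSq (T c) := by
  have h1 : ‖∑ c ∈ s, (d c : ℂ) * T c‖ ≤ ∑ c ∈ s, |d c| * ‖T c‖ := by
    refine le_trans (norm_sum_le _ _) ?_
    refine Finset.sum_le_sum fun c _ => ?_
    rw [norm_mul, Complex.norm_real, Real.norm_eq_abs]
  have h2 : (∑ c ∈ s, |d c| * ‖T c‖)^2
      ≤ (∑ c ∈ s, |d c|) * ∑ c ∈ s, |d c| * ‖T c‖^2 := by
    have key := Finset.sum_mul_sq_le_sq_mul_sq s (fun c => Real.sqrt |d c|)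
      (fun c => Real.sqrt |d c| * ‖T c‖)
    have e1 : ∀ c, Real.sqrt |d c| * (Real.sqrt |d c| * ‖T c‖)
        = |d c| * ‖T c‖ := by
      intro c
      rw [← mul_assoc, Real.mul_self_sqrt (abs_nonneg _)]
    have e2 : ∀ c, Real.sqrt |d c| ^ 2 = |d c| := fun c => Real.sq_sqrt (abs_nonneg _)
    have e3 : ∀ c, (Real.sqrt |d c| * ‖T c‖)^2 = |d c| * ‖T c‖^2 := by
      intro c
      rw [mul_pow, e2]
    calc (∑ c ∈ s, |d c| * ‖T c‖)^2
        = (∑ c ∈ s, Real.sqrt |d c| * (Real.sqrt |d c| * ‖T c‖))^2 := by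
          rw [Finset.sum_congr rfl fun c _ => (e1 c).symm]
      _ ≤ (∑ c ∈ s, Real.sqrt |d c| ^ 2) * ∑ c ∈ s, (Real.sqrt |d c| * ‖T c‖)^2 :=
          key
      _ = (∑ c ∈ s, |d c|) * ∑ c ∈ s, |d c| * ‖T c‖^2 := by
          rw [Finset.sum_congr rfl fun c _ => e2 c, Finset.sum_congr rfl fun c _ => e3 c]
  have h3 : ∑ c ∈ s, |d c| * ‖T c‖^2 ≤ ∑ c ∈ s, q c * Complex.normSq (T c) := by
    refine Finset.sum_le_sum fun c hc => ?_
    rw [Complex.sq_norm]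
    exact mul_le_mul_of_nonneg_right (hq c hc) (Complex.normSq_nonneg _)
  have habs : 0 ≤ ‖∑ c ∈ s, (d c : ℂ) * T c‖ := norm_nonneg _
  have hsum : 0 ≤ ∑ c ∈ s, |d c| := Finset.sum_nonneg fun c _ => abs_nonneg _
  calc ‖∑ c ∈ s, (d c : ℂ) * T c‖ ^ 2
      ≤ (∑ c ∈ s, |d c| * ‖T c‖)^2 := by
        apply pow_le_pow_left₀ habs h1
    _ ≤ (∑ c ∈ s, |d c|) * ∑ c ∈ s, |d c| * ‖T c‖^2 := h2
    _ ≤ (∑ c ∈ s, |d c|) * ∑ c ∈ s, q c * Complex.normSq (T c) :=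
        mul_le_mul_of_nonneg_left h3 hsum

end KS
namespace KS
set_option linter.unusedSectionVars false
set_option linter.unusedVariables false
set_option maxHeartbeats 2000000

open Complex

variable {A : Type} [Fintype A] [DecidableEq A]

section lower
variable {M : A → A → ℝ} {v : A → ℂ} {lam2 : ℂ} {b : ℕ}

lemma censusDist_nonneg (hnn : ∀ i j, 0 ≤ M i j) (b : ℕ) (i : A) (n : ℕ) (c : A → ℕ) :
    0 ≤ censusDist M b i n c := by
  rw [censusDist]
  refine Finset.sum_nonneg fun σ _ => ?_
  split_ifs
  · exact levelDist_nonneg hnn b i n σ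
  · exact le_refl 0

lemma censusDist_sub (i j : A) (n : ℕ) (c : A → ℕ) :
    censusDist M b i n c - censusDist M b j n c
      = ∑ σ : Cfg A b n, if census σ = c
          then levelDist M b i n σ - levelDist M b j n σ else 0 := by
  rw [censusDist, censusDist, ← Finset.sum_sub_distrib]
  exact Finset.sum_congr rfl fun σ _ => by split_ifs <;> simp

lemma mean_diff_census (v : A → ℂ) (i j : A) (n : ℕ) :
    ∑ c ∈ csupp A b n, ((censusDist M b i n c - censusDist M b j n c : ℝ) : ℂ) * Sc v c
      = meanS M v b i n - meanS M v b j n := by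
  simp only [censusDist_sub i j n]
  rw [regroupC (fun σ => levelDist M b i n σ - levelDist M b j n σ) (Sc v)]
  rw [meanS, meanS, ← Finset.sum_sub_distrib]
  refine Finset.sum_congr rfl fun σ _ => ?_
  rw [← Sfun_eq_Sc]
  push_cast
  ring

lemma m2_census (v : A → ℂ) (i : A) (n : ℕ) :
    ∑ c ∈ csupp A b n, censusDist M b i n c * Complex.normSq (Sc v c) = m2S M v b i n :=
  calc ∑ c ∈ csupp A b n, censusDist M b i n c * Complex.normSq (Sc v c)
      = ∑ c ∈ csupp A b n, (∑ σ : Cfg A b n, if census σ = c then levelDist M b i n σ else 0)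
          * Complex.normSq (Sc v c) := rfl
    _ = ∑ σ : Cfg A b n, levelDist M b i n σ * Complex.normSq (Sc v (census σ)) :=
        regroupR _ _
    _ = m2S M v b i n := by
        rw [m2S]
        exact Finset.sum_congr rfl fun σ _ => by rw [← Sfun_eq_Sc]

lemma mean_diff_level (v : A → ℂ) (i j : A) (n : ℕ) :
    ∑ σ : Cfg A b n, ((levelDist M b i n σ - levelDist M b j n σ : ℝ) : ℂ) * Sfun v b n σ
      = meanS M v b i n - meanS M v b j n := by
  rw [meanS, meanS, ← Finset.sum_sub_distrib]
  refine Finset.sum_congr rfl fun σ _ => ?_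
  push_cast
  ring

lemma normSq_mean_diff (hrow : ∀ i, ∑ j, M i j = 1)
    (heig : ∀ p, ∑ a, ((M p a : ℝ) : ℂ) * v a = lam2 * v p) (i j : A) (n : ℕ) :
    Complex.normSq (meanS M v b i n - meanS M v b j n)
      = ((b:ℝ)^2 * Complex.normSq lam2)^n * Complex.normSq (v i - v j) := by
  rw [meanS_formula hrow heig i n, meanS_formula hrow heig j n, ← mul_sub,
    Complex.normSq_mul, map_pow, Complex.normSq_mul]
  have : Complex.normSq ((b:ℕ):ℂ) = (b:ℝ)^2 := by
    simp [Complex.normSq_apply]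
    ring
  rw [this]

/-- the main uniform-in-`n` lower bound for the census total variation -/
lemma censusTV_lower (hnn : ∀ i j, 0 ≤ M i j) (hrow : ∀ i, ∑ j, M i j = 1)
    (heig : ∀ p, ∑ a, ((M p a : ℝ) : ℂ) * v a = lam2 * v p)
    (hlam : 1 < (b:ℝ) * Complex.normSq lam2) (i j : A) (n : ℕ) :
    Complex.normSq (v i - v j)
      ≤ 4 * ((∑ a, Complex.normSq (v a)) * (1 - ((b:ℝ) * Complex.normSq lam2)⁻¹)⁻¹)
        * censusTV M b i j n := by
  set B := (b:ℝ)^2 * Complex.normSq lam2 with hB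
  set rr := ((b:ℝ) * Complex.normSq lam2)⁻¹ with hrr
  set C0 := ∑ a, Complex.normSq (v a) with hC0
  set K := C0 * (1 - rr)⁻¹ with hK
  have hbn : (0:ℝ) < (b:ℝ) * Complex.normSq lam2 := by
    nlinarith [Complex.normSq_nonneg lam2, (show (0:ℝ) ≤ b from Nat.cast_nonneg b)]
  have hbpos : (0:ℝ) < b := by nlinarith [Complex.normSq_nonneg lam2]
  have hBpos : (0:ℝ) < B := by rw [hB]; nlinarith
  have hrr0 : 0 ≤ rr := le_of_lt (inv_pos.2 hbn)
  have hrr1 : rr < 1 := by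
    rw [hrr]
    rw [inv_lt_one_iff₀]
    right
    exact hlam
  have hC00 : 0 ≤ C0 := Finset.sum_nonneg fun a _ => Complex.normSq_nonneg _
  have hKpos : 0 ≤ K := mul_nonneg hC00 (le_of_lt (inv_pos.2 (by linarith)))
  have hm2 : ∀ l : A, m2S M v b l n ≤ K * B^n := by
    intro l
    calc m2S M v b l n ≤ C0 * B^n * ∑ k ∈ Finset.range (n+1), rr^k :=
          m2S_le hnn hrow heig hlam l n
      _ ≤ C0 * B^n * (1 - rr)⁻¹ := by
          refine mul_le_mul_of_nonneg_left (geom_le hrr0 hrr1 (n+1)) ?_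
          exact mul_nonneg hC00 (le_of_lt (pow_pos hBpos n))
      _ = K * B^n := by rw [hK]; ring
  -- Cauchy-Schwarz through the census
  have key := cs_bound (csupp A b n)
    (fun c => censusDist M b i n c - censusDist M b j n c)
    (fun c => censusDist M b i n c + censusDist M b j n c)
    (fun c _ => by
      have h1 := censusDist_nonneg hnn b i n c
      have h2 := censusDist_nonneg hnn b j n c
      rw [abs_sub_le_iff]
      constructor <;> linarith)
    (Sc v)
  rw [mean_diff_census v i j n] at key
  have e1 : ‖meanS M v b i n - meanS M v b j n‖ ^ 2
      = B^n * Complex.normSq (v i - v j) := by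
    rw [Complex.sq_norm, normSq_mean_diff hrow heig]
  rw [e1] at key
  have e2 : ∑ c ∈ csupp A b n,
      |censusDist M b i n c - censusDist M b j n c| = 2 * censusTV M b i j n := by
    rw [censusTV_eq]
    ring
  rw [e2] at key
  have e3 : ∑ c ∈ csupp A b n, (censusDist M b i n c + censusDist M b j n c)
      * Complex.normSq (Sc v c) = m2S M v b i n + m2S M v b j n := by
    rw [← m2_census v i n, ← m2_census v j n, ← Finset.sum_add_distrib]
    exact Finset.sum_congr rfl fun c _ => by ring
  rw [e3] at key
  -- key : B^n * normSq (v i - v j) ≤ 2 * censusTV * (m2S i + m2S j)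
  have htv0 : 0 ≤ censusTV M b i j n := by
    rw [censusTV_eq]
    positivity
  have hfin : B^n * Complex.normSq (v i - v j)
      ≤ B^n * (4 * K * censusTV M b i j n) := by
    calc B^n * Complex.normSq (v i - v j)
        ≤ 2 * censusTV M b i j n * (m2S M v b i n + m2S M v b j n) := key
      _ ≤ 2 * censusTV M b i j n * (2 * (K * B^n)) := by
          refine mul_le_mul_of_nonneg_left ?_ (by linarith)
          have := hm2 i
          have := hm2 j
          linarith
      _ = B^n * (4 * K * censusTV M b i j n) := by ring
  have h4 : Complex.normSq (v i - v j) * B^n ≤ (4 * K * censusTV M b i j n) * B^n := by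
    calc Complex.normSq (v i - v j) * B^n = B^n * Complex.normSq (v i - v j) := by ring
      _ ≤ B^n * (4 * K * censusTV M b i j n) := hfin
      _ = (4 * K * censusTV M b i j n) * B^n := by ring
  have h5 := le_of_mul_le_mul_right h4 (pow_pos hBpos n)
  linarith

/-- the analogous lower bound for the full total variation distance -/
lemma tvDist_lower (hnn : ∀ i j, 0 ≤ M i j) (hrow : ∀ i, ∑ j, M i j = 1)
    (heig : ∀ p, ∑ a, ((M p a : ℝ) : ℂ) * v a = lam2 * v p)
    (hlam : 1 < (b:ℝ) * Complex.normSq lam2) (i j : A) (n : ℕ) :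
    Complex.normSq (v i - v j)
      ≤ 4 * ((∑ a, Complex.normSq (v a)) * (1 - ((b:ℝ) * Complex.normSq lam2)⁻¹)⁻¹)
        * tvDist (levelDist M b i n) (levelDist M b j n) := by
  set B := (b:ℝ)^2 * Complex.normSq lam2 with hB
  set rr := ((b:ℝ) * Complex.normSq lam2)⁻¹ with hrr
  set C0 := ∑ a, Complex.normSq (v a) with hC0
  set K := C0 * (1 - rr)⁻¹ with hK
  have hbn : (0:ℝ) < (b:ℝ) * Complex.normSq lam2 := by
    nlinarith [Complex.normSq_nonneg lam2, (show (0:ℝ) ≤ b from Nat.cast_nonneg b)]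
  have hbpos : (0:ℝ) < b := by nlinarith [Complex.normSq_nonneg lam2]
  have hBpos : (0:ℝ) < B := by rw [hB]; nlinarith
  have hrr0 : 0 ≤ rr := le_of_lt (inv_pos.2 hbn)
  have hrr1 : rr < 1 := by
    rw [hrr, inv_lt_one_iff₀]
    right
    exact hlam
  have hC00 : 0 ≤ C0 := Finset.sum_nonneg fun a _ => Complex.normSq_nonneg _
  have hKpos : 0 ≤ K := mul_nonneg hC00 (le_of_lt (inv_pos.2 (by linarith)))
  have hm2 : ∀ l : A, m2S M v b l n ≤ K * B^n := by
    intro l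
    calc m2S M v b l n ≤ C0 * B^n * ∑ k ∈ Finset.range (n+1), rr^k :=
          m2S_le hnn hrow heig hlam l n
      _ ≤ C0 * B^n * (1 - rr)⁻¹ := by
          refine mul_le_mul_of_nonneg_left (geom_le hrr0 hrr1 (n+1)) ?_
          exact mul_nonneg hC00 (le_of_lt (pow_pos hBpos n))
      _ = K * B^n := by rw [hK]; ring
  have key := cs_bound (Finset.univ : Finset (Cfg A b n))
    (fun σ => levelDist M b i n σ - levelDist M b j n σ)
    (fun σ => levelDist M b i n σ + levelDist M b j n σ)
    (fun σ _ => by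
      have h1 := levelDist_nonneg hnn b i n σ
      have h2 := levelDist_nonneg hnn b j n σ
      rw [abs_sub_le_iff]
      constructor <;> linarith)
    (Sfun v b n)
  rw [mean_diff_level v i j n] at key
  have e1 : ‖meanS M v b i n - meanS M v b j n‖ ^ 2
      = B^n * Complex.normSq (v i - v j) := by
    rw [Complex.sq_norm, normSq_mean_diff hrow heig]
  rw [e1] at key
  have e2 : ∑ σ : Cfg A b n, |levelDist M b i n σ - levelDist M b j n σ|
      = 2 * tvDist (levelDist M b i n) (levelDist M b j n) := by
    rw [tvDist]
    ring
  rw [e2] at key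
  have e3 : ∑ σ : Cfg A b n, (levelDist M b i n σ + levelDist M b j n σ)
      * Complex.normSq (Sfun v b n σ) = m2S M v b i n + m2S M v b j n := by
    rw [m2S, m2S, ← Finset.sum_add_distrib]
    exact Finset.sum_congr rfl fun σ _ => by ring
  rw [e3] at key
  have htv0 : 0 ≤ tvDist (levelDist M b i n) (levelDist M b j n) := by
    rw [tvDist]
    positivity
  have hfin : B^n * Complex.normSq (v i - v j)
      ≤ B^n * (4 * K * tvDist (levelDist M b i n) (levelDist M b j n)) := by
    calc B^n * Complex.normSq (v i - v j)
        ≤ 2 * tvDist (levelDist M b i n) (levelDist M b j n)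
            * (m2S M v b i n + m2S M v b j n) := key
      _ ≤ 2 * tvDist (levelDist M b i n) (levelDist M b j n) * (2 * (K * B^n)) := by
          refine mul_le_mul_of_nonneg_left ?_ (by linarith)
          have := hm2 i
          have := hm2 j
          linarith
      _ = B^n * (4 * K * tvDist (levelDist M b i n) (levelDist M b j n)) := by ring
  have h4 : Complex.normSq (v i - v j) * B^n
      ≤ (4 * K * tvDist (levelDist M b i n) (levelDist M b j n)) * B^n := by
    calc Complex.normSq (v i - v j) * B^n = B^n * Complex.normSq (v i - v j) := by ring
      _ ≤ B^n * (4 * K * tvDist (levelDist M b i n) (levelDist M b j n)) := hfin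
      _ = (4 * K * tvDist (levelDist M b i n) (levelDist M b j n)) * B^n := by ring
  have h5 := le_of_mul_le_mul_right h4 (pow_pos hBpos n)
  linarith

end lower

end KS
namespace KS
set_option linter.unusedSectionVars false
set_option linter.unusedVariables false
set_option maxHeartbeats 2000000

variable {A : Type} [Fintype A] [DecidableEq A]

section mono
variable {M : A → A → ℝ} {b : ℕ}

lemma tvDist_succ_le (hnn : ∀ i j, 0 ≤ M i j) (hrow : ∀ i, ∑ j, M i j = 1)
    (i j : A) (n : ℕ) :
    tvDist (levelDist M b i (n+1)) (levelDist M b j (n+1))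
      ≤ tvDist (levelDist M b i n) (levelDist M b j n) := by
  rw [tvDist, tvDist]
  refine mul_le_mul_of_nonneg_left ?_ (by norm_num)
  calc ∑ τ : Cfg A b (n+1), |levelDist M b i (n+1) τ - levelDist M b j (n+1) τ|
      = ∑ τ : Cfg A b (n+1), |∑ σ : Cfg A b n,
          (levelDist M b i n σ - levelDist M b j n σ) * ker M b n σ τ| := by
        refine Finset.sum_congr rfl fun τ _ => ?_
        rw [levelDist_succ, levelDist_succ, ← Finset.sum_sub_distrib]
        congr 1
        exact Finset.sum_congr rfl fun σ _ => by ring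
    _ ≤ ∑ τ : Cfg A b (n+1), ∑ σ : Cfg A b n,
          |levelDist M b i n σ - levelDist M b j n σ| * ker M b n σ τ := by
        refine Finset.sum_le_sum fun τ _ => ?_
        refine le_trans (Finset.abs_sum_le_sum_abs _ _) (Finset.sum_le_sum fun σ _ => ?_)
        rw [abs_mul, abs_of_nonneg (ker_nonneg hnn σ τ)]
    _ = ∑ σ : Cfg A b n, |levelDist M b i n σ - levelDist M b j n σ| := by
        rw [Finset.sum_comm]
        refine Finset.sum_congr rfl fun σ _ => ?_
        rw [← Finset.mul_sum, sum_ker hrow, mul_one]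

/-- the census-level transition kernel -/
noncomputable def gker (M : A → A → ℝ) (b n : ℕ) (σ : Cfg A b n) (c' : A → ℕ) : ℝ :=
  ∑ τ : Cfg A b (n+1), if census τ = c' then ker M b n σ τ else 0

lemma gker_nonneg (hnn : ∀ i j, 0 ≤ M i j) {n : ℕ} (σ : Cfg A b n) (c' : A → ℕ) :
    0 ≤ gker M b n σ c' := by
  refine Finset.sum_nonneg fun τ _ => ?_
  split_ifs
  · exact ker_nonneg hnn σ τ
  · exact le_refl 0

lemma sum_gker (hrow : ∀ i, ∑ j, M i j = 1) {n : ℕ} (σ : Cfg A b n) :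
    ∑ c' ∈ csupp A b (n+1), gker M b n σ c' = 1 := by
  simp only [gker]
  rw [Finset.sum_comm]
  have inner : ∀ τ : Cfg A b (n+1),
      ∑ c' ∈ csupp A b (n+1), (if census τ = c' then ker M b n σ τ else 0)
        = ker M b n σ τ := by
    intro τ
    rw [Finset.sum_ite_eq (csupp A b (n+1)) (census τ) (fun _ => ker M b n σ τ),
      if_pos (census_mem_csupp τ)]
  rw [Finset.sum_congr rfl fun τ _ => inner τ, sum_ker hrow]

lemma censusDist_succ (M : A → A → ℝ) (b : ℕ) (i : A) (n : ℕ) (c' : A → ℕ) :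
    censusDist M b i (n+1) c'
      = ∑ σ : Cfg A b n, levelDist M b i n σ * gker M b n σ c' := by
  rw [censusDist]
  simp only [levelDist_succ, gker, Finset.mul_sum]
  have e1 : ∀ τ : Cfg A b (n+1),
      (if census τ = c' then ∑ σ : Cfg A b n, levelDist M b i n σ * ker M b n σ τ else 0)
        = ∑ σ : Cfg A b n, (if census τ = c' then levelDist M b i n σ * ker M b n σ τ else 0) := by
    intro τ
    split_ifs <;> simp
  rw [Finset.sum_congr rfl fun τ _ => e1 τ, Finset.sum_comm]
  refine Finset.sum_congr rfl fun σ _ => Finset.sum_congr rfl fun τ _ => ?_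
  split_ifs <;> simp

lemma census_comp_perm {b n : ℕ} (τ : Cfg A b n) (Ψ : Equiv.Perm (Fin n → Fin b)) :
    census (fun p => τ (Ψ p)) = census τ := by
  funext a
  rw [census, census, ← Fintype.card_subtype, ← Fintype.card_subtype]
  exact Fintype.card_congr (Ψ.subtypeEquiv (fun p => Iff.rfl))

lemma exists_perm_of_census_eq {b n : ℕ} {σ σ' : Cfg A b n} (h : census σ = census σ') :
    ∃ π : Equiv.Perm (Fin n → Fin b), ∀ x, σ (π x) = σ' x := by
  have hcard : ∀ a : A, Fintype.card {x // σ' x = a} = Fintype.card {x // σ x = a} := by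
    intro a
    rw [Fintype.card_subtype, Fintype.card_subtype]
    have h1 := congrFun h a
    rw [census, census] at h1
    exact h1.symm
  exact ⟨Equiv.ofFiberEquiv (f := σ') (g := σ) (fun a => Fintype.equivOfCardEq (hcard a)),
    fun x => Equiv.ofFiberEquiv_map _ x⟩

lemma gker_census_eq {n : ℕ} {σ σ' : Cfg A b n} (h : census σ = census σ') (c' : A → ℕ) :
    gker M b n σ c' = gker M b n σ' c' := by
  obtain ⟨π, hπ⟩ := exists_perm_of_census_eq h
  symm
  set Ψ : Equiv.Perm (Fin (n+1) → Fin b) :=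
    ((pathEquiv b n).symm.trans ((Equiv.prodCongr π (Equiv.refl (Fin b))).trans
      (pathEquiv b n))) with hΨdef
  have hΨ : ∀ w : Fin (n+1) → Fin b,
      Ψ w = pathEquiv b n (π (fun m => w m.castSucc), w (Fin.last n)) := fun w => rfl
  have hparent : ∀ w : Fin (n+1) → Fin b,
      (fun m => Ψ w m.castSucc) = π (fun m => w m.castSucc) := by
    intro w
    have h0 := pathEquiv_parent b n (π (fun m => w m.castSucc)) (w (Fin.last n))
    rw [← hΨ w] at h0
    exact h0
  -- reindexing equivalence on configurations
  set E : Cfg A b (n+1) ≃ Cfg A b (n+1) :=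
    { toFun := fun ρ => fun w => ρ (Ψ w)
      invFun := fun ρ => fun w => ρ (Ψ.symm w)
      left_inv := fun ρ => by funext w; simp
      right_inv := fun ρ => by funext w; simp } with hE
  have hker : ∀ ρ : Cfg A b (n+1), ker M b n σ' (E ρ) = ker M b n σ ρ := by
    intro ρ
    calc ker M b n σ' (E ρ)
        = ∏ w : Fin (n+1) → Fin b,
            M (σ (fun m => (Ψ w) m.castSucc)) (ρ (Ψ w)) := by
          rw [ker]
          refine Finset.prod_congr rfl fun w _ => ?_
          have h2 : σ' (fun m => w m.castSucc) = σ (fun m => Ψ w m.castSucc) := by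
            rw [hparent w, hπ]
          rw [h2]
          rfl
      _ = ker M b n σ ρ := by
          rw [ker]
          exact Equiv.prod_comp Ψ (fun w => M (σ fun m => w m.castSucc) (ρ w))
  have hcen : ∀ ρ : Cfg A b (n+1), census (E ρ) = census ρ := by
    intro ρ
    exact census_comp_perm ρ Ψ
  calc gker M b n σ' c'
      = ∑ ρ : Cfg A b (n+1), if census (E ρ) = c' then ker M b n σ' (E ρ) else 0 := by
        rw [gker]
        exact (Equiv.sum_comp E (fun τ => if census τ = c' then ker M b n σ' τ else 0)).symm
    _ = ∑ ρ : Cfg A b (n+1), if census ρ = c' then ker M b n σ ρ else 0 := by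
        refine Finset.sum_congr rfl fun ρ _ => ?_
        rw [hcen ρ, hker ρ]
    _ = gker M b n σ c' := rfl

lemma censusTV_succ_le [Nonempty A] (hnn : ∀ i j, 0 ≤ M i j) (hrow : ∀ i, ∑ j, M i j = 1)
    (i j : A) (n : ℕ) :
    censusTV M b i j (n+1) ≤ censusTV M b i j n := by
  rw [censusTV_eq, censusTV_eq]
  refine mul_le_mul_of_nonneg_left ?_ (by norm_num)
  have hfact : ∀ (σ : Cfg A b n) c', gker M b n σ c'
      = gker M b n (Function.invFun (census (A := A) (b := b) (n := n)) (census σ)) c' := by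
    intro σ c'
    apply gker_census_eq
    exact (Function.invFun_eq ⟨σ, rfl⟩).symm
  have hdist : ∀ (l : A) c', censusDist M b l (n+1) c'
      = ∑ c ∈ csupp A b n, censusDist M b l n c
          * gker M b n (Function.invFun (census (A := A) (b := b) (n := n)) c) c' := by
    intro l c'
    rw [censusDist_succ]
    rw [Finset.sum_congr rfl fun σ _ => by rw [hfact σ c']]
    rw [← regroupR (fun σ => levelDist M b l n σ)
      (fun c => gker M b n (Function.invFun (census (A := A) (b := b) (n := n)) c) c')]
    rfl
  calc ∑ c' ∈ csupp A b (n+1), |censusDist M b i (n+1) c' - censusDist M b j (n+1) c'|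
      = ∑ c' ∈ csupp A b (n+1), |∑ c ∈ csupp A b n,
          (censusDist M b i n c - censusDist M b j n c)
            * gker M b n (Function.invFun (census (A := A) (b := b) (n := n)) c) c'| := by
        refine Finset.sum_congr rfl fun c' _ => ?_
        rw [hdist i c', hdist j c', ← Finset.sum_sub_distrib]
        congr 1
        exact Finset.sum_congr rfl fun c _ => by ring
    _ ≤ ∑ c' ∈ csupp A b (n+1), ∑ c ∈ csupp A b n,
          |censusDist M b i n c - censusDist M b j n c|
            * gker M b n (Function.invFun (census (A := A) (b := b) (n := n)) c) c' := by
        refine Finset.sum_le_sum fun c' _ => ?_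
        refine le_trans (Finset.abs_sum_le_sum_abs _ _) (Finset.sum_le_sum fun c _ => ?_)
        rw [abs_mul, abs_of_nonneg (gker_nonneg hnn _ _)]
    _ = ∑ c ∈ csupp A b n, |censusDist M b i n c - censusDist M b j n c| := by
        rw [Finset.sum_comm]
        refine Finset.sum_congr rfl fun c _ => ?_
        rw [← Finset.mul_sum, sum_gker hrow, mul_one]

end mono

end KS
/-- If `M` is ergodic and `b |λ₂(M)|² > 1`, then the reconstruction problem for
the `b`-ary tree and `M` is census solvable, and in particular solvable. -/
theorem census_solvable_of_second_eigenvalue {A : Type} [Fintype A] [DecidableEq A]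
    (M : A → A → ℝ) (hnn : ∀ i j, 0 ≤ M i j) (hrow : ∀ i, ∑ j, M i j = 1)
    (herg : IsErgodic M)
    (lam2 : ℂ) (heig : IsEigenvalue M lam2) (hne1 : lam2 ≠ 1)
    (hmax : ∀ mu : ℂ, IsEigenvalue M mu → mu ≠ 1 → ‖mu‖ ≤ ‖lam2‖)
    (b : ℕ) (hb : 2 ≤ b) (h : 1 < (b : ℝ) * ‖lam2‖ ^ 2) :
    (∃ i j : A, ∃ L > 0, Tendsto (fun n => censusTV M b i j n) atTop (nhds L)) ∧
    (∃ i j : A, ∃ L > 0, Tendsto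
      (fun n => tvDist (levelDist M b i n) (levelDist M b j n)) atTop (nhds L)) := by
  classical
  obtain ⟨v, hv0, hveig⟩ := heig
  have heig' : ∀ p, ∑ a, ((M p a : ℝ) : ℂ) * v a = lam2 * v p := hveig
  have hA : Nonempty A := by
    by_contra hA
    exact hv0 (funext fun a => absurd ⟨a⟩ hA)
  have hlam : 1 < (b:ℝ) * Complex.normSq lam2 := by
    rwa [← Complex.sq_norm]
  have hvnc : ∃ i j : A, v i ≠ v j := by
    by_contra hc
    push_neg at hc
    obtain ⟨a0⟩ := hA
    have hval : lam2 * v a0 = v a0 := by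
      rw [← heig' a0]
      calc ∑ a, ((M a0 a : ℝ):ℂ) * v a = ∑ a, ((M a0 a : ℝ):ℂ) * v a0 :=
            Finset.sum_congr rfl fun a _ => by rw [hc a a0]
        _ = ((∑ a, M a0 a : ℝ) : ℂ) * v a0 := by push_cast; rw [Finset.sum_mul]
        _ = v a0 := by rw [hrow a0]; simp
    by_cases hv : v a0 = 0
    · refine hv0 (funext fun a => ?_)
      rw [hc a a0, hv]
      rfl
    · exact hne1 (mul_right_cancel₀ hv (by rw [hval, one_mul]))
  obtain ⟨i, j, hij⟩ := hvnc
  set K := (∑ a, Complex.normSq (v a)) * (1 - ((b:ℝ) * Complex.normSq lam2)⁻¹)⁻¹ with hK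
  have hbn : (0:ℝ) < (b:ℝ) * Complex.normSq lam2 := by linarith
  have hrrlt : ((b:ℝ) * Complex.normSq lam2)⁻¹ < 1 := by
    rw [inv_lt_one_iff₀]
    right
    exact hlam
  have hC0 : 0 < ∑ a, Complex.normSq (v a) := by
    have hex : ∃ a, v a ≠ 0 := by
      by_contra hcc
      push_neg at hcc
      exact hv0 (funext fun a => hcc a)
    obtain ⟨a, ha⟩ := hex
    exact Finset.sum_pos' (fun a' _ => Complex.normSq_nonneg _)
      ⟨a, Finset.mem_univ a, Complex.normSq_pos.2 ha⟩
  have hKpos : 0 < K := mul_pos hC0 (inv_pos.2 (by linarith))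
  set c0 := Complex.normSq (v i - v j) / (4 * K) with hc0
  have hc0pos : 0 < c0 :=
    div_pos (Complex.normSq_pos.2 (sub_ne_zero.2 hij)) (by linarith)
  have hlow1 : ∀ n, c0 ≤ censusTV M b i j n := by
    intro n
    rw [hc0, div_le_iff₀ (by linarith : (0:ℝ) < 4 * K)]
    exact (KS.censusTV_lower hnn hrow heig' hlam i j n).trans_eq (by rw [hK]; ring)
  have hlow2 : ∀ n, c0 ≤ tvDist (levelDist M b i n) (levelDist M b j n) := by
    intro n
    rw [hc0, div_le_iff₀ (by linarith : (0:ℝ) < 4 * K)]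
    exact (KS.tvDist_lower hnn hrow heig' hlam i j n).trans_eq (by rw [hK]; ring)
  have hanti1 : Antitone (fun n => censusTV M b i j n) :=
    antitone_nat_of_succ_le fun n => KS.censusTV_succ_le hnn hrow i j n
  have hanti2 : Antitone (fun n => tvDist (levelDist M b i n) (levelDist M b j n)) :=
    antitone_nat_of_succ_le fun n => KS.tvDist_succ_le hnn hrow i j n
  have hbdd1 : BddBelow (Set.range (fun n => censusTV M b i j n)) := by
    refine ⟨c0, ?_⟩
    rintro x ⟨n, rfl⟩
    exact hlow1 n
  have hbdd2 : BddBelow (Set.range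
      (fun n => tvDist (levelDist M b i n) (levelDist M b j n))) := by
    refine ⟨c0, ?_⟩
    rintro x ⟨n, rfl⟩
    exact hlow2 n
  constructor
  · exact ⟨i, j, ⨅ n, censusTV M b i j n,
      lt_of_lt_of_le hc0pos (le_ciInf hlow1),
      tendsto_atTop_ciInf hanti1 hbdd1⟩
  · exact ⟨i, j, ⨅ n, tvDist (levelDist M b i n) (levelDist M b j n),
      lt_of_lt_of_le hc0pos (le_ciInf hlow2),
      tendsto_atTop_ciInf hanti2 hbdd2⟩
end
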